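/- arXiv:1203.5738 — 5 statements merged into one kernel-verified Lean document; each statement's English description precedes it below -/
import Mathlib

section
/- The map sending an r-colored partition Λ of [n] to the tuple (Λ_1, ..., Λ_r), where Λ_t is the uncolored partition of [n] whose arcs are exactly the t-colored arcs of Λ, is a bijection from r-colored partitions of [n] to r-tuples (P_1, ..., P_r) of partitions of [n] such that for any distinct i, j in [r], min(P_i) ∪ min(P_j) = [n] and max(P_i) ∪ max(P_j) = [n]. -/
open Finset

/-- `IsArc P i j` : `(i,j)` is an arc of the set partition `P`. -/
def IsArc {n : ℕ} (P : Finpartition (Finset.univ : Finset (Fin n))) (i j : Fin n) : Prop :=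
  i < j ∧ ∃ B ∈ P.parts, i ∈ B ∧ j ∈ B ∧ ∀ k ∈ B, i < k → j ≤ k

/-- The set of minimal elements of blocks of `P`. -/
def blockMin {n : ℕ} (P : Finpartition (Finset.univ : Finset (Fin n))) : Set (Fin n) :=
  {i | ∃ B ∈ P.parts, i ∈ B ∧ ∀ k ∈ B, i ≤ k}

/-- The set of maximal elements of blocks of `P`. -/
def blockMax {n : ℕ} (P : Finpartition (Finset.univ : Finset (Fin n))) : Set (Fin n) :=
  {i | ∃ B ∈ P.parts, i ∈ B ∧ ∀ k ∈ B, k ≤ i}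

/-- An `r`-colored partition of `[n]`. -/
structure ColoredPartition (n r : ℕ) where
  P : Finpartition (Finset.univ : Finset (Fin n))
  color : ∀ i j : Fin n, IsArc P i j → Fin r

/-- `Λ` has a `k`-crossing: `k` same-colored arcs with
`i₁ < ⋯ < i_k < j₁ < ⋯ < j_k`. -/
def HasCrossing {n r : ℕ} (Λ : ColoredPartition n r) (k : ℕ) : Prop :=
  ∃ (f g : Fin k → Fin n) (c : Fin r),
    StrictMono f ∧ StrictMono g ∧ (∀ s t : Fin k, f s < g t) ∧
    ∀ t, ∃ h : IsArc Λ.P (f t) (g t), Λ.color (f t) (g t) h = c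

/-- `Λ` has a `k`-nesting: `k` same-colored arcs with
`i₁ < ⋯ < i_k < j_k < ⋯ < j₁`. -/
def HasNesting {n r : ℕ} (Λ : ColoredPartition n r) (k : ℕ) : Prop :=
  ∃ (f g : Fin k → Fin n) (c : Fin r),
    StrictMono f ∧ StrictAnti g ∧ (∀ s t : Fin k, f s < g t) ∧
    ∀ t, ∃ h : IsArc Λ.P (f t) (g t), Λ.color (f t) (g t) h = c

/-- Uncolored `k`-crossing. -/
def HasCrossingP {n : ℕ} (P : Finpartition (Finset.univ : Finset (Fin n))) (k : ℕ) : Prop :=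
  ∃ f g : Fin k → Fin n, StrictMono f ∧ StrictMono g ∧ (∀ s t : Fin k, f s < g t) ∧
    ∀ t, IsArc P (f t) (g t)

/-- Uncolored `k`-nesting. -/
def HasNestingP {n : ℕ} (P : Finpartition (Finset.univ : Finset (Fin n))) (k : ℕ) : Prop :=
  ∃ f g : Fin k → Fin n, StrictMono f ∧ StrictAnti g ∧ (∀ s t : Fin k, f s < g t) ∧
    ∀ t, IsArc P (f t) (g t)

/-- The crossing number of a colored partition: the largest `k` with a `k`-crossing. -/
noncomputable def crNum {n r : ℕ} (Λ : ColoredPartition n r) : ℕ :=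
  sSup {k | 0 < k ∧ HasCrossing Λ k}

noncomputable def neNum {n r : ℕ} (Λ : ColoredPartition n r) : ℕ :=
  sSup {k | 0 < k ∧ HasNesting Λ k}

noncomputable def crNumP {n : ℕ} (P : Finpartition (Finset.univ : Finset (Fin n))) : ℕ :=
  sSup {k | 0 < k ∧ HasCrossingP P k}

noncomputable def neNumP {n : ℕ} (P : Finpartition (Finset.univ : Finset (Fin n))) : ℕ :=
  sSup {k | 0 < k ∧ HasNestingP P k}

/-- A matching: all blocks have at most two elements. -/
def IsMatching {m : ℕ} (P : Finpartition (Finset.univ : Finset (Fin m))) : Prop :=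
  ∀ B ∈ P.parts, B.card ≤ 2

/-- A complete matching: all blocks have exactly two elements. -/
def IsCompleteMatching {m : ℕ} (P : Finpartition (Finset.univ : Finset (Fin m))) : Prop :=
  ∀ B ∈ P.parts, B.card = 2

/-- `i ∈ [n] ↦ 2i ∈ [2n]` (0-based: the element of 1-based value `2(i+1)-1`). -/
def dbl {n : ℕ} (i : Fin n) : Fin (2 * n) := ⟨2 * i.1, by have := i.2; omega⟩

/-- `i ∈ [n] ↦` 0-based index `2i+1` of `[2n]` (1-based value `2(i+1)`). -/
def dbl1 {n : ℕ} (i : Fin n) : Fin (2 * n) := ⟨2 * i.1 + 1, by have := i.2; omega⟩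

/-- Enhanced arcs: arcs of `P` together with loops `(i,i)` at isolated points. -/
def EnhIsArc {n : ℕ} (P : Finpartition (Finset.univ : Finset (Fin n))) (i j : Fin n) : Prop :=
  IsArc P i j ∨ (i = j ∧ i ∈ blockMin P ∧ i ∈ blockMax P)

/-- An `r`-colored enhanced partition of `[n]`. -/
structure EnhColoredPartition (n r : ℕ) where
  P : Finpartition (Finset.univ : Finset (Fin n))
  color : ∀ i j : Fin n, EnhIsArc P i j → Fin r

/-- Enhanced `k`-crossing: same-colored enhanced arcs with
`i₁ < ⋯ < i_k ≤ j₁ < ⋯ < j_k`. -/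
def HasEnhCrossing {n r : ℕ} (Λ : EnhColoredPartition n r) (k : ℕ) : Prop :=
  ∃ (f g : Fin k → Fin n) (c : Fin r),
    StrictMono f ∧ StrictMono g ∧ (∀ s t : Fin k, f s ≤ g t) ∧
    ∀ t, ∃ h : EnhIsArc Λ.P (f t) (g t), Λ.color (f t) (g t) h = c

/-- Enhanced `k`-nesting: same-colored enhanced arcs with
`i₁ < ⋯ < i_k ≤ j_k < ⋯ < j₁`. -/
def HasEnhNesting {n r : ℕ} (Λ : EnhColoredPartition n r) (k : ℕ) : Prop :=
  ∃ (f g : Fin k → Fin n) (c : Fin r),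
    StrictMono f ∧ StrictAnti g ∧ (∀ s t : Fin k, f s ≤ g t) ∧
    ∀ t, ∃ h : EnhIsArc Λ.P (f t) (g t), Λ.color (f t) (g t) h = c

noncomputable def enhCrNum {n r : ℕ} (Λ : EnhColoredPartition n r) : ℕ :=
  sSup {k | 0 < k ∧ HasEnhCrossing Λ k}

noncomputable def enhNeNum {n r : ℕ} (Λ : EnhColoredPartition n r) : ℕ :=
  sSup {k | 0 < k ∧ HasEnhNesting Λ k}

/-- The `(r+1)²` steps: `±e_i` (first summand with a sign), `e_i − e_j` for `i ≠ j`,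
and `r+1` distinct zero steps. -/
def Step (r : ℕ) : Type :=
  (Fin r × Bool) ⊕ ({p : Fin r × Fin r // p.1 ≠ p.2} ⊕ Fin (r + 1))

/-- The displacement vector of a step. -/
def stepVec {r : ℕ} : Step r → Fin r → ℤ
  | Sum.inl (i, b) => fun t => if t = i then (if b then 1 else -1) else 0
  | Sum.inr (Sum.inl p) => fun t => (if t = p.1.1 then 1 else 0) - (if t = p.1.2 then 1 else 0)
  | Sum.inr (Sum.inr _) => fun _ => 0

/-- Position after the first `k` steps of a walk started at the origin. -/
def walkPos {r m : ℕ} (w : Fin m → Step r) (k : ℕ) (t : Fin r) : ℤ :=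
  ∑ i ∈ Finset.univ.filter (fun i : Fin m => i.1 < k), stepVec (w i) t

/-- The walk stays in `ℕ^r` throughout and returns to the origin. -/
def IsClosedWalk {r m : ℕ} (w : Fin m → Step r) : Prop :=
  (∀ k : ℕ, ∀ t : Fin r, 0 ≤ walkPos w k t) ∧ ∀ t : Fin r, walkPos w m t = 0

/-- An `r`-colored permutation of `[n]`. -/
structure ColoredPerm (n r : ℕ) where
  sigma : Equiv.Perm (Fin n)
  cplus : ∀ i : Fin n, i ≤ sigma i → Fin r
  cminus : ∀ i : Fin n, sigma i < i → Fin r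

/-- `k`-crossing of a colored permutation: an enhanced `k`-crossing among same-colored
upper arcs `(i, σ i)`, or an ordinary `k`-crossing among same-colored lower arcs `(σ i, i)`. -/
def PermHasCrossing {n r : ℕ} (S : ColoredPerm n r) (k : ℕ) : Prop :=
  (∃ (f : Fin k → Fin n) (c : Fin r),
      StrictMono f ∧ StrictMono (fun t => S.sigma (f t)) ∧
      (∀ s t : Fin k, f s ≤ S.sigma (f t)) ∧
      ∀ t, ∃ h : f t ≤ S.sigma (f t), S.cplus (f t) h = c) ∨
  (∃ (f : Fin k → Fin n) (c : Fin r),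
      StrictMono (fun t => S.sigma (f t)) ∧ StrictMono f ∧
      (∀ s t : Fin k, S.sigma (f s) < f t) ∧
      ∀ t, ∃ h : S.sigma (f t) < f t, S.cminus (f t) h = c)

/-- `k`-nesting of a colored permutation. -/
def PermHasNesting {n r : ℕ} (S : ColoredPerm n r) (k : ℕ) : Prop :=
  (∃ (f : Fin k → Fin n) (c : Fin r),
      StrictMono f ∧ StrictAnti (fun t => S.sigma (f t)) ∧
      (∀ s t : Fin k, f s ≤ S.sigma (f t)) ∧
      ∀ t, ∃ h : f t ≤ S.sigma (f t), S.cplus (f t) h = c) ∨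
  (∃ (f : Fin k → Fin n) (c : Fin r),
      StrictMono (fun t => S.sigma (f t)) ∧ StrictAnti f ∧
      (∀ s t : Fin k, S.sigma (f s) < f t) ∧
      ∀ t, ∃ h : S.sigma (f t) < f t, S.cminus (f t) h = c)

namespace CPProof
open Relation
variable {n : ℕ} {P P' : Finpartition (Finset.univ : Finset (Fin n))}

def SameBlock (P : Finpartition (Finset.univ : Finset (Fin n))) (i j : Fin n) : Prop :=
  ∃ B ∈ P.parts, i ∈ B ∧ j ∈ B

lemma sameBlock_of_arc {i j : Fin n} (h : IsArc P i j) : SameBlock P i j := by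
  obtain ⟨_, B, hB, hi, hj, _⟩ := h; exact ⟨B, hB, hi, hj⟩

lemma sameBlock_refl (P : Finpartition (Finset.univ : Finset (Fin n))) (i : Fin n) :
    SameBlock P i i := by
  obtain ⟨B, hB, hi⟩ := P.exists_mem (mem_univ i); exact ⟨B, hB, hi, hi⟩

lemma sameBlock_symm {i j : Fin n} (h : SameBlock P i j) : SameBlock P j i := by
  obtain ⟨B, hB, hi, hj⟩ := h; exact ⟨B, hB, hj, hi⟩

lemma sameBlock_trans {i j k : Fin n} (h : SameBlock P i j) (h' : SameBlock P j k) :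
    SameBlock P i k := by
  obtain ⟨B, hB, hi, hj⟩ := h; obtain ⟨B', hB', hj', hk⟩ := h'
  exact ⟨B, hB, hi, (P.eq_of_mem_parts hB hB' hj hj') ▸ hk⟩

lemma sameBlock_iff_mem_part {i j : Fin n} : SameBlock P i j ↔ j ∈ P.part i := by
  constructor
  · rintro ⟨B, hB, hi, hj⟩; rwa [P.part_eq_of_mem hB hi]
  · intro h; exact ⟨P.part i, P.part_mem.2 (mem_univ i), P.mem_part (mem_univ i), h⟩

lemma arc_right_unique {i j j' : Fin n} (h : IsArc P i j) (h' : IsArc P i j') : j = j' := by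
  obtain ⟨hij, B, hB, hi, hj, hmin⟩ := h
  obtain ⟨hij', B', hB', hi', hj', hmin'⟩ := h'
  have hBB : B = B' := P.eq_of_mem_parts hB hB' hi hi'
  subst hBB
  exact le_antisymm (hmin j' hj' hij') (hmin' j hj hij)

lemma arc_left_unique {i i' j : Fin n} (h : IsArc P i j) (h' : IsArc P i' j) : i = i' := by
  obtain ⟨hij, B, hB, hi, hj, hmin⟩ := h
  obtain ⟨hij', B', hB', hi', hj', hmin'⟩ := h'
  have hBB : B = B' := P.eq_of_mem_parts hB hB' hj hj'
  subst hBB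
  by_contra hne
  rcases lt_or_gt_of_ne hne with hlt | hlt
  · exact absurd (hmin i' hi' hlt) (not_le.2 hij')
  · exact absurd (hmin' i hi hlt) (not_le.2 hij)

lemma mem_blockMin_iff {i : Fin n} : i ∈ blockMin P ↔ ∀ k, ¬ IsArc P k i := by
  constructor
  · rintro ⟨B, hB, hi, hmin⟩ k ⟨hki, B', hB', hk, hi', _⟩
    have : B = B' := P.eq_of_mem_parts hB hB' hi hi'
    subst this
    exact absurd (hmin k hk) (not_le.2 hki)
  · intro hno
    obtain ⟨B, hB, hi⟩ := P.exists_mem (mem_univ i)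
    refine ⟨B, hB, hi, ?_⟩
    by_contra hc
    push_neg at hc
    obtain ⟨k₀, hk₀, hk₀i⟩ := hc
    set T := B.filter (· < i) with hT
    have hTne : T.Nonempty := ⟨k₀, mem_filter.2 ⟨hk₀, hk₀i⟩⟩
    set m := T.max' hTne with hm
    have hmT := T.max'_mem hTne
    rw [mem_filter] at hmT
    refine hno m ⟨hmT.2, B, hB, hmT.1, hi, ?_⟩
    intro x hx hmx
    by_contra hxi
    push_neg at hxi
    exact absurd (T.le_max' x (mem_filter.2 ⟨hx, hxi⟩)) (not_le.2 hmx)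

lemma mem_blockMax_iff {i : Fin n} : i ∈ blockMax P ↔ ∀ k, ¬ IsArc P i k := by
  constructor
  · rintro ⟨B, hB, hi, hmax⟩ k ⟨hik, B', hB', hi', hk, _⟩
    have : B = B' := P.eq_of_mem_parts hB hB' hi hi'
    subst this
    exact absurd (hmax k hk) (not_le.2 hik)
  · intro hno
    obtain ⟨B, hB, hi⟩ := P.exists_mem (mem_univ i)
    refine ⟨B, hB, hi, ?_⟩
    by_contra hc
    push_neg at hc
    obtain ⟨k₀, hk₀, hik₀⟩ := hc
    set T := B.filter (i < ·) with hT
    have hTne : T.Nonempty := ⟨k₀, mem_filter.2 ⟨hk₀, hik₀⟩⟩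
    set m := T.min' hTne with hm
    have hmT := T.min'_mem hTne
    rw [mem_filter] at hmT
    refine hno m ⟨hmT.2, B, hB, hi, hmT.1, ?_⟩
    intro x hx hix
    exact T.min'_le x (mem_filter.2 ⟨hx, hix⟩)

/-- Every element of a block is `EqvGen (IsArc P)`-related to the block's minimum. -/
lemma eqvGen_min'_aux : ∀ m : ℕ, ∀ j : Fin n, j.1 < m → ∀ B ∈ P.parts, ∀ hj : j ∈ B,
    EqvGen (IsArc P) (B.min' ⟨j, hj⟩) j := by
  intro m
  induction m with
  | zero => intro j hj; omega
  | succ m ih =>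
    intro j hjm B hB hj
    by_cases hmin : B.min' ⟨j, hj⟩ = j
    · rw [hmin]; exact EqvGen.refl j
    · have hlt : B.min' ⟨j, hj⟩ < j := lt_of_le_of_ne (B.min'_le j hj) hmin
      set T := B.filter (· < j) with hT
      have hTne : T.Nonempty := ⟨B.min' ⟨j, hj⟩, mem_filter.2 ⟨B.min'_mem _, hlt⟩⟩
      set k := T.max' hTne with hk
      have hkT := T.max'_mem hTne
      rw [mem_filter] at hkT
      have harc : IsArc P k j := by
        refine ⟨hkT.2, B, hB, hkT.1, hj, ?_⟩
        intro x hx hkx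
        by_contra hxj
        push_neg at hxj
        exact absurd (T.le_max' x (mem_filter.2 ⟨hx, hxj⟩)) (not_le.2 hkx)
      have hkm : k.1 < m := by
        have := hkT.2
        omega
      have := ih k hkm B hB hkT.1
      exact EqvGen.trans _ _ _ this (EqvGen.rel _ _ harc)

lemma sameBlock_iff_eqvGen {i j : Fin n} : SameBlock P i j ↔ EqvGen (IsArc P) i j := by
  constructor
  · rintro ⟨B, hB, hi, hj⟩
    have h1 := eqvGen_min'_aux n i i.2 B hB hi
    have h2 := eqvGen_min'_aux n j j.2 B hB hj
    exact EqvGen.trans _ _ _ (EqvGen.symm _ _ h1) h2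
  · intro h
    induction h with
    | rel a b h => exact sameBlock_of_arc h
    | refl a => exact sameBlock_refl P a
    | symm a b _ ih => exact sameBlock_symm ih
    | trans a b c _ _ ih1 ih2 => exact sameBlock_trans ih1 ih2

lemma parts_subset_of_arc_iff (h : ∀ i j, IsArc P i j ↔ IsArc P' i j) :
    P.parts ⊆ P'.parts := by
  intro B hB
  obtain ⟨x, hx⟩ := P.nonempty_of_mem_parts hB
  have hsb : ∀ y, SameBlock P x y ↔ SameBlock P' x y := by
    intro y
    rw [sameBlock_iff_eqvGen, sameBlock_iff_eqvGen]
    have : IsArc P = IsArc P' := by funext i j; exact propext (h i j)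
    rw [this]
  have : B = P'.part x := by
    ext y
    constructor
    · intro hy
      exact sameBlock_iff_mem_part.1 ((hsb y).1 ⟨B, hB, hx, hy⟩)
    · intro hy
      obtain ⟨C, hC, hxC, hyC⟩ := (hsb y).2 (sameBlock_iff_mem_part.2 hy)
      rwa [P.eq_of_mem_parts hB hC hx hxC]
  rw [this]
  exact P'.part_mem.2 (mem_univ x)

lemma eq_of_arc_iff (h : ∀ i j, IsArc P i j ↔ IsArc P' i j) : P = P' :=
  Finpartition.ext (Finset.Subset.antisymm (parts_subset_of_arc_iff h)
    (parts_subset_of_arc_iff (fun i j => (h i j).symm)))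

/-! ### Valid arc systems -/

section ArcSystem

variable (A : Fin n → Fin n → Prop)

local notation "R" => Relation.ReflTransGen A

variable {A}

lemma R_le (h1 : ∀ i j, A i j → i < j) {a b : Fin n} (h : Relation.ReflTransGen A a b) :
    a ≤ b := by
  induction h with
  | refl => exact le_refl _
  | tail h' step ih => exact ih.trans (le_of_lt (h1 _ _ step))

lemma R_down (h3 : ∀ i i' j, A i j → A i' j → i = i') {a b c : Fin n}
    (hac : Relation.ReflTransGen A a c) (hbc : Relation.ReflTransGen A b c) :
    Relation.ReflTransGen A a b ∨ Relation.ReflTransGen A b a := by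
  induction hac with
  | refl => exact Or.inr hbc
  | @tail x c hax step ih =>
    rcases Relation.ReflTransGen.cases_tail hbc with rfl | ⟨y, hby, hyc⟩
    · exact Or.inl (hax.tail step)
    · have : y = x := h3 _ _ _ hyc step
      subst this
      exact ih hby
  
lemma R_up (h2 : ∀ i j j', A i j → A i j' → j = j') {a b c : Fin n}
    (hab : Relation.ReflTransGen A a b) (hac : Relation.ReflTransGen A a c) :
    Relation.ReflTransGen A b c ∨ Relation.ReflTransGen A c b := by
  induction hab using Relation.ReflTransGen.head_induction_on with
  | refl => exact Or.inl hac
  | @head a x step hxb ih =>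
    rcases Relation.ReflTransGen.cases_head hac with rfl | ⟨y, hay, hyc⟩
    · exact Or.inr (Relation.ReflTransGen.head step hxb)
    · have : y = x := h2 _ _ _ hay step
      subst this
      exact ih hyc

lemma eqvGen_iff_R (h2 : ∀ i j j', A i j → A i j' → j = j')
    (h3 : ∀ i i' j, A i j → A i' j → i = i') {a b : Fin n} :
    EqvGen A a b ↔ (Relation.ReflTransGen A a b ∨ Relation.ReflTransGen A b a) := by
  constructor
  · intro h
    induction h with
    | rel a b h => exact Or.inl (Relation.ReflTransGen.single h)
    | refl a => exact Or.inl Relation.ReflTransGen.refl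
    | symm a b _ ih => exact ih.symm
    | trans a b c _ _ ih1 ih2 =>
      rcases ih1 with h1 | h1 <;> rcases ih2 with h2' | h2'
      · exact Or.inl (h1.trans h2')
      · exact R_down h3 h1 h2'
      · exact R_up h2 h1 h2'
      · exact Or.inr (h2'.trans h1)
  · rintro (h | h)
    · induction h with
      | refl => exact EqvGen.refl _
      | tail h' step ih => exact EqvGen.trans _ _ _ ih (EqvGen.rel _ _ step)
    · have : EqvGen A b a := by
        induction h with
        | refl => exact EqvGen.refl _
        | tail h' step ih => exact EqvGen.trans _ _ _ ih (EqvGen.rel _ _ step)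
      exact EqvGen.symm _ _ this

variable (A) in
noncomputable def piA : Finpartition (Finset.univ : Finset (Fin n)) :=
  @Finpartition.ofSetoid (Fin n) _ _ (Relation.EqvGen.setoid A)
    (fun _ _ => Classical.propDecidable _)

lemma sameBlock_piA {i j : Fin n} : SameBlock (piA A) i j ↔ EqvGen A i j := by
  rw [sameBlock_iff_mem_part]
  exact @Finpartition.mem_part_ofSetoid_iff_rel (Fin n) _ i _ (Relation.EqvGen.setoid A)
    (fun _ _ => Classical.propDecidable _) j

lemma isArc_piA (h1 : ∀ i j, A i j → i < j) (h2 : ∀ i j j', A i j → A i j' → j = j')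
    (h3 : ∀ i i' j, A i j → A i' j → i = i') {i j : Fin n} :
    IsArc (piA A) i j ↔ A i j := by
  constructor
  · rintro ⟨hij, B, hB, hi, hj, hmin⟩
    have hsb : SameBlock (piA A) i j := ⟨B, hB, hi, hj⟩
    have heq := sameBlock_piA.1 hsb
    rcases (eqvGen_iff_R h2 h3).1 heq with hR | hR
    · rcases Relation.ReflTransGen.cases_head hR with rfl | ⟨x, hix, hxj⟩
      · exact absurd hij (lt_irrefl _)
      · -- x is in same block as i, and i < x, so j ≤ x; also x ≤ j from hxj
        have hxle : x ≤ j := R_le h1 hxj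
        have hxB : x ∈ B := by
          have : SameBlock (piA A) i x := sameBlock_piA.2 (EqvGen.rel _ _ hix)
          obtain ⟨C, hC, hiC, hxC⟩ := this
          rwa [(piA A).eq_of_mem_parts hC hB hiC hi] at hxC
        have hjx : j ≤ x := hmin x hxB (h1 _ _ hix)
        have : x = j := le_antisymm hxle hjx
        rwa [this] at hix
    · exact absurd (R_le h1 hR) (not_le.2 hij)
  · intro hA
    refine ⟨h1 _ _ hA, (piA A).part i, (piA A).part_mem.2 (mem_univ i),
      (piA A).mem_part (mem_univ i), ?_, ?_⟩
    · exact sameBlock_iff_mem_part.1 (sameBlock_piA.2 (EqvGen.rel _ _ hA))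
    · intro k hk hik
      have hsb : SameBlock (piA A) i k := sameBlock_iff_mem_part.2 hk
      rcases (eqvGen_iff_R h2 h3).1 (sameBlock_piA.1 hsb) with hR | hR
      · rcases Relation.ReflTransGen.cases_head hR with rfl | ⟨x, hix, hxk⟩
        · exact absurd hik (lt_irrefl _)
        · have : x = j := h2 _ _ _ hix hA
          subst this
          exact R_le h1 hxk
      · exact absurd (R_le h1 hR) (not_le.2 hik)

end ArcSystem
section Assembly
variable {n r : ℕ}

/-- The `t`-colored arc relation of a colored partition. -/
def At (Λ : ColoredPartition n r) (t : Fin r) (i j : Fin n) : Prop :=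
  ∃ h : IsArc Λ.P i j, Λ.color i j h = t

lemma At_h1 (Λ : ColoredPartition n r) (t : Fin r) : ∀ i j, At Λ t i j → i < j :=
  fun _ _ ⟨h, _⟩ => h.1

lemma At_h2 (Λ : ColoredPartition n r) (t : Fin r) :
    ∀ i j j', At Λ t i j → At Λ t i j' → j = j' :=
  fun _ _ _ ⟨h, _⟩ ⟨h', _⟩ => arc_right_unique h h'

lemma At_h3 (Λ : ColoredPartition n r) (t : Fin r) :
    ∀ i i' j, At Λ t i j → At Λ t i' j → i = i' :=
  fun _ _ _ ⟨h, _⟩ ⟨h', _⟩ => arc_left_unique h h'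

noncomputable def fwd (Λ : ColoredPartition n r) (t : Fin r) :
    Finpartition (Finset.univ : Finset (Fin n)) :=
  piA (At Λ t)

lemma isArc_fwd {Λ : ColoredPartition n r} {t : Fin r} {i j : Fin n} :
    IsArc (fwd Λ t) i j ↔ At Λ t i j :=
  isArc_piA (At_h1 Λ t) (At_h2 Λ t) (At_h3 Λ t)

lemma fwd_prop (Λ : ColoredPartition n r) :
    ∀ t t' : Fin r, t ≠ t' →
      blockMin (fwd Λ t) ∪ blockMin (fwd Λ t') = Set.univ ∧
      blockMax (fwd Λ t) ∪ blockMax (fwd Λ t') = Set.univ := by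
  intro t t' htt
  constructor
  · apply Set.eq_univ_of_forall
    intro i
    by_contra hc
    rw [Set.mem_union, not_or] at hc
    obtain ⟨h1, h2⟩ := hc
    rw [mem_blockMin_iff] at h1 h2
    push_neg at h1 h2
    obtain ⟨k, hk⟩ := h1
    obtain ⟨k', hk'⟩ := h2
    obtain ⟨ha, hca⟩ := isArc_fwd.1 hk
    obtain ⟨ha', hca'⟩ := isArc_fwd.1 hk'
    have : k = k' := arc_left_unique ha ha'
    subst this
    exact htt (hca ▸ hca' ▸ rfl)
  · apply Set.eq_univ_of_forall
    intro i
    by_contra hc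
    rw [Set.mem_union, not_or] at hc
    obtain ⟨h1, h2⟩ := hc
    rw [mem_blockMax_iff] at h1 h2
    push_neg at h1 h2
    obtain ⟨k, hk⟩ := h1
    obtain ⟨k', hk'⟩ := h2
    obtain ⟨ha, hca⟩ := isArc_fwd.1 hk
    obtain ⟨ha', hca'⟩ := isArc_fwd.1 hk'
    have : k = k' := arc_right_unique ha ha'
    subst this
    exact htt (hca ▸ hca' ▸ rfl)

/-- The condition on tuples of partitions. -/
def Cond (Q : Fin r → Finpartition (Finset.univ : Finset (Fin n))) : Prop :=
  ∀ i j : Fin r, i ≠ j →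
    blockMin (Q i) ∪ blockMin (Q j) = Set.univ ∧
    blockMax (Q i) ∪ blockMax (Q j) = Set.univ

/-- The union arc relation of a tuple of partitions. -/
def AU (Q : Fin r → Finpartition (Finset.univ : Finset (Fin n))) (i j : Fin n) : Prop :=
  ∃ t, IsArc (Q t) i j

lemma AU_h1 (Q : Fin r → Finpartition (Finset.univ : Finset (Fin n))) :
    ∀ i j, AU Q i j → i < j :=
  fun _ _ ⟨_, h⟩ => h.1

lemma color_unique {Q : Fin r → Finpartition (Finset.univ : Finset (Fin n))} (hQ : Cond Q)
    {i j j' : Fin n} {t t' : Fin r} (h : IsArc (Q t) i j) (h' : IsArc (Q t') i j') : t = t' := by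
  by_contra hne
  have hu := (hQ t t' hne).2
  have : i ∈ blockMax (Q t) ∪ blockMax (Q t') := hu ▸ Set.mem_univ i
  rcases this with hm | hm
  · exact (mem_blockMax_iff.1 hm) j h
  · exact (mem_blockMax_iff.1 hm) j' h'

lemma color_unique' {Q : Fin r → Finpartition (Finset.univ : Finset (Fin n))} (hQ : Cond Q)
    {i i' j : Fin n} {t t' : Fin r} (h : IsArc (Q t) i j) (h' : IsArc (Q t') i' j) : t = t' := by
  by_contra hne
  have hu := (hQ t t' hne).1
  have : j ∈ blockMin (Q t) ∪ blockMin (Q t') := hu ▸ Set.mem_univ j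
  rcases this with hm | hm
  · exact (mem_blockMin_iff.1 hm) i h
  · exact (mem_blockMin_iff.1 hm) i' h'

lemma AU_h2 {Q : Fin r → Finpartition (Finset.univ : Finset (Fin n))} (hQ : Cond Q) :
    ∀ i j j', AU Q i j → AU Q i j' → j = j' := by
  rintro i j j' ⟨t, h⟩ ⟨t', h'⟩
  have : t = t' := color_unique hQ h h'
  subst this
  exact arc_right_unique h h'

lemma AU_h3 {Q : Fin r → Finpartition (Finset.univ : Finset (Fin n))} (hQ : Cond Q) :
    ∀ i i' j, AU Q i j → AU Q i' j → i = i' := by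
  rintro i i' j ⟨t, h⟩ ⟨t', h'⟩
  have : t = t' := color_unique' hQ h h'
  subst this
  exact arc_left_unique h h'

lemma isArc_invP {Q : Fin r → Finpartition (Finset.univ : Finset (Fin n))} (hQ : Cond Q)
    {i j : Fin n} : IsArc (piA (AU Q)) i j ↔ AU Q i j :=
  isArc_piA (AU_h1 Q) (AU_h2 hQ) (AU_h3 hQ)

noncomputable def bwd (Q : Fin r → Finpartition (Finset.univ : Finset (Fin n)))
    (hQ : Cond Q) : ColoredPartition n r where
  P := piA (AU Q)
  color := fun i j h => ((isArc_invP hQ).1 h).choose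

lemma cp_ext {Λ Λ' : ColoredPartition n r} (hP : Λ.P = Λ'.P)
    (hc : ∀ i j (h : IsArc Λ.P i j) (h' : IsArc Λ'.P i j), Λ.color i j h = Λ'.color i j h') :
    Λ = Λ' := by
  cases Λ with | mk P c =>
  cases Λ' with | mk P' c' =>
  subst hP
  have : c = c' := by funext i j h; exact hc i j h h
  rw [this]

lemma choose_eq {p : Fin r → Prop} (X : ∃ t, p t)
    (uniq : ∀ s t, p s → p t → s = t) (t : Fin r) (ht : p t) : X.choose = t :=
  uniq _ _ X.choose_spec ht

noncomputable def cpEquiv : ColoredPartition n r ≃ {Q : Fin r → Finpartition (Finset.univ : Finset (Fin n)) // Cond Q} where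
  toFun Λ := ⟨fwd Λ, fwd_prop Λ⟩
  invFun Q := bwd Q.1 Q.2
  left_inv Λ := by
    have hP : (bwd (fwd Λ) (fwd_prop Λ)).P = Λ.P := by
      apply eq_of_arc_iff
      intro i j
      show IsArc (piA (AU (fwd Λ))) i j ↔ _
      rw [isArc_invP (fwd_prop Λ)]
      constructor
      · rintro ⟨t, h⟩
        exact (isArc_fwd.1 h).1
      · intro h
        exact ⟨Λ.color i j h, isArc_fwd.2 ⟨h, rfl⟩⟩
    apply cp_ext hP
    intro i j h h'
    show (((isArc_invP (fwd_prop Λ)).1 h).choose : Fin r) = Λ.color i j h'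
    apply choose_eq _ (fun s t hs ht => color_unique (fwd_prop Λ) hs ht)
    exact isArc_fwd.2 ⟨h', rfl⟩
  right_inv Q := by
    apply Subtype.ext
    funext t
    apply eq_of_arc_iff
    intro i j
    show IsArc (fwd (bwd Q.1 Q.2) t) i j ↔ _
    rw [isArc_fwd]
    constructor
    · rintro ⟨h, hc⟩
      have spec := ((isArc_invP Q.2).1 h).choose_spec
      rw [show ((isArc_invP Q.2).1 h).choose = t from hc] at spec
      exact spec
    · intro hq
      have h : IsArc (bwd Q.1 Q.2).P i j := (isArc_invP Q.2).2 ⟨t, hq⟩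
      refine ⟨h, ?_⟩
      show ((isArc_invP Q.2).1 h).choose = t
      exact choose_eq _ (fun s t hs ht => color_unique Q.2 hs ht) t hq

end Assembly
end CPProof


/-- The color-splitting map is a bijection from `r`-colored partitions of `[n]`
onto `r`-tuples of partitions with `min(Pᵢ) ∪ min(Pⱼ) = max(Pᵢ) ∪ max(Pⱼ) = [n]`
for all distinct `i, j`; the `t`-th component of the image has as arcs exactly
the `t`-colored arcs of `Λ`. -/
theorem stmt0 (n r : ℕ) :
    ∃ e : ColoredPartition n r ≃
        {Q : Fin r → Finpartition (Finset.univ : Finset (Fin n)) //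
          ∀ i j : Fin r, i ≠ j →
            blockMin (Q i) ∪ blockMin (Q j) = Set.univ ∧
            blockMax (Q i) ∪ blockMax (Q j) = Set.univ},
      ∀ (Λ : ColoredPartition n r) (t : Fin r) (a b : Fin n),
        IsArc ((e Λ).1 t) a b ↔ ∃ h : IsArc Λ.P a b, Λ.color a b h = t := by
  refine ⟨CPProof.cpEquiv, ?_⟩
  intro Λ t a b
  exact CPProof.isArc_fwd
end

section
/- The map sending a partition P of [n] to the matching M of [2n] with Arc(M) = {(2i, 2j−1) : (i,j) ∈ Arc(P)} is a bijection from the set of partitions of [n] to the set of matchings M of [2n] such that 2i ∈ min(M) and 2i−1 ∈ max(M) for all i ∈ [n]; moreover cr(P) = cr(M) and ne(P) = ne(M). -/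
open Finset

open Relation

variable {N : ℕ}

def SameBlock {N : ℕ} (P : Finpartition (Finset.univ : Finset (Fin N))) (a b : Fin N) : Prop :=
  ∃ B ∈ P.parts, a ∈ B ∧ b ∈ B

lemma sameBlock_iff_mem_part {P : Finpartition (Finset.univ : Finset (Fin N))} {a b : Fin N} :
    SameBlock P a b ↔ b ∈ P.part a := by
  constructor
  · rintro ⟨B, hB, ha, hb⟩
    rw [P.part_eq_of_mem hB ha]; exact hb
  · intro h
    exact ⟨P.part a, P.part_mem.2 (mem_univ a), P.mem_part (mem_univ a), h⟩

lemma sameBlock_refl (P : Finpartition (Finset.univ : Finset (Fin N))) (a : Fin N) :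
    SameBlock P a a :=
  ⟨P.part a, P.part_mem.2 (mem_univ a), P.mem_part (mem_univ a), P.mem_part (mem_univ a)⟩

lemma sameBlock_symm {P : Finpartition (Finset.univ : Finset (Fin N))} {a b : Fin N}
    (h : SameBlock P a b) : SameBlock P b a := by
  obtain ⟨B, hB, ha, hb⟩ := h; exact ⟨B, hB, hb, ha⟩

lemma sameBlock_trans {P : Finpartition (Finset.univ : Finset (Fin N))} {a b c : Fin N}
    (h : SameBlock P a b) (h' : SameBlock P b c) : SameBlock P a c := by
  obtain ⟨B, hB, ha, hb⟩ := h
  obtain ⟨B', hB', hb', hc⟩ := h'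
  exact ⟨B, hB, ha, (P.eq_of_mem_parts hB hB' hb hb') ▸ hc⟩

lemma eq_of_sameBlock {P Q : Finpartition (Finset.univ : Finset (Fin N))}
    (h : ∀ a b, SameBlock P a b ↔ SameBlock Q a b) : P = Q := by
  have key : ∀ x, P.part x = Q.part x := by
    intro x
    ext y
    rw [← sameBlock_iff_mem_part, ← sameBlock_iff_mem_part, h]
  ext B
  constructor
  · intro hB
    obtain ⟨x, hx⟩ := P.nonempty_of_mem_parts hB
    have : P.part x = B := P.part_eq_of_mem hB hx
    rw [← this, key]; exact Q.part_mem.2 (mem_univ x)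
  · intro hB
    obtain ⟨x, hx⟩ := Q.nonempty_of_mem_parts hB
    have : Q.part x = B := Q.part_eq_of_mem hB hx
    rw [← this, ← key]; exact P.part_mem.2 (mem_univ x)

structure GoodRel {N : ℕ} (R : Fin N → Fin N → Prop) : Prop where
  inc : ∀ {a b}, R a b → a < b
  fn : ∀ {a b b'}, R a b → R a b' → b = b'
  inj : ∀ {a a' b}, R a b → R a' b → a = a'

def SB {N : ℕ} (R : Fin N → Fin N → Prop) (a b : Fin N) : Prop :=
  ReflTransGen R a b ∨ ReflTransGen R b a

lemma rtg_le {R : Fin N → Fin N → Prop} (hR : GoodRel R) {a b : Fin N}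
    (h : ReflTransGen R a b) : a ≤ b := by
  induction h with
  | refl => exact le_refl _
  | tail _ hbc ih => exact le_trans ih (hR.inc hbc).le

lemma sb_equivalence {R : Fin N → Fin N → Prop} (hR : GoodRel R) : Equivalence (SB R) := by
  constructor
  · intro a; exact Or.inl ReflTransGen.refl
  · intro a b h; exact h.symm
  · intro a b c hab hbc
    have hfn : Relator.RightUnique R := fun a b c h h' => hR.fn h h'
    have hinj : Relator.RightUnique (Function.swap R) := fun a b c h h' => hR.inj h h'
    rcases hab with hab | hba <;> rcases hbc with hbc | hcb
    · exact Or.inl (hab.trans hbc)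
    · -- a →* b, c →* b : compare via swap
      have h1 : ReflTransGen (Function.swap R) b a := reflTransGen_swap.2 hab
      have h2 : ReflTransGen (Function.swap R) b c := reflTransGen_swap.2 hcb
      rcases ReflTransGen.total_of_right_unique hinj h1 h2 with h | h
      · exact Or.inr (reflTransGen_swap.1 h)
      · exact Or.inl (reflTransGen_swap.1 h)
    · rcases ReflTransGen.total_of_right_unique hfn hba hbc with h | h
      · exact Or.inl h
      · exact Or.inr h
    · exact Or.inr (hcb.trans hba)

lemma isArc_iff' {P : Finpartition (Finset.univ : Finset (Fin N))} {i j : Fin N} :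
    IsArc P i j ↔ i < j ∧ SameBlock P i j ∧ ∀ k, SameBlock P i k → i < k → j ≤ k := by
  constructor
  · rintro ⟨hij, B, hB, hi, hj, hleast⟩
    refine ⟨hij, ⟨B, hB, hi, hj⟩, ?_⟩
    rintro k ⟨B', hB', hi', hk⟩ hik
    exact hleast k ((P.eq_of_mem_parts hB' hB hi' hi) ▸ hk) hik
  · rintro ⟨hij, ⟨B, hB, hi, hj⟩, hleast⟩
    exact ⟨hij, B, hB, hi, hj, fun k hk hik => hleast k ⟨B, hB, hi, hk⟩ hik⟩

lemma goodRel_isArc (P : Finpartition (Finset.univ : Finset (Fin N))) : GoodRel (IsArc P) := by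
  constructor
  · intro a b h; exact h.1
  · intro a b b' h h'
    rw [isArc_iff'] at h h'
    exact le_antisymm (h.2.2 b' h'.2.1 h'.1) (h'.2.2 b h.2.1 h.1)
  · intro a a' b h h'
    by_contra hne
    rw [isArc_iff'] at h h'
    have hsb : SameBlock P a a' := sameBlock_trans h.2.1 (sameBlock_symm h'.2.1)
    rcases lt_or_gt_of_ne hne with hlt | hlt
    · exact absurd (h.2.2 a' hsb hlt) (not_le.2 h'.1)
    · exact absurd (h'.2.2 a (sameBlock_symm hsb) hlt) (not_le.2 h.1)

lemma isArc_of_sb {R : Fin N → Fin N → Prop} (hR : GoodRel R)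
    {P : Finpartition (Finset.univ : Finset (Fin N))}
    (hP : ∀ a b, SameBlock P a b ↔ SB R a b) {i j : Fin N} :
    IsArc P i j ↔ R i j := by
  rw [isArc_iff']
  constructor
  · rintro ⟨hij, hsb, hleast⟩
    rw [hP] at hsb
    rcases hsb with h | h
    · rcases h.cases_head with rfl | ⟨c, hic, hcj⟩
      · exact absurd hij (lt_irrefl _)
      · have hcj' : c ≤ j := rtg_le hR hcj
        have hjc : j ≤ c := hleast c ((hP i c).2 (Or.inl (ReflTransGen.single hic))) (hR.inc hic)
        exact (le_antisymm hjc hcj') ▸ hic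
    · exact absurd (rtg_le hR h) (not_le.2 hij)
  · intro h
    refine ⟨hR.inc h, (hP i j).2 (Or.inl (ReflTransGen.single h)), ?_⟩
    intro k hsb hik
    rw [hP] at hsb
    rcases hsb with hk | hk
    · rcases hk.cases_head with rfl | ⟨c, hic, hck⟩
      · exact absurd hik (lt_irrefl _)
      · exact (hR.fn h hic) ▸ rtg_le hR hck
    · exact absurd (rtg_le hR hk) (not_le.2 hik)

lemma sameBlock_iff_sb_isArc (P : Finpartition (Finset.univ : Finset (Fin N))) (a b : Fin N) :
    SameBlock P a b ↔ SB (IsArc P) a b := by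
  have hR := goodRel_isArc P
  have fwd : ∀ d (a b : Fin N), b.1 - a.1 = d → a ≤ b → SameBlock P a b →
      ReflTransGen (IsArc P) a b := by
    intro d
    induction d using Nat.strong_induction_on with
    | _ d ih =>
      intro a b hd hab hsb
      rcases eq_or_lt_of_le hab with rfl | hlt
      · exact ReflTransGen.refl
      · set T := (P.part a).filter (fun k => a < k) with hT
        have hbT : b ∈ T := by
          rw [hT, mem_filter]
          exact ⟨sameBlock_iff_mem_part.1 hsb, hlt⟩
        have hTne : T.Nonempty := ⟨b, hbT⟩
        set j := T.min' hTne with hj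
        have hjT : j ∈ T := T.min'_mem hTne
        rw [hT, mem_filter] at hjT
        have hjb : j ≤ b := T.min'_le b hbT
        have harc : IsArc P a j := by
          rw [isArc_iff']
          refine ⟨hjT.2, sameBlock_iff_mem_part.2 hjT.1, ?_⟩
          intro k hk hak
          exact T.min'_le k (by rw [hT, mem_filter]; exact ⟨sameBlock_iff_mem_part.1 hk, hak⟩)
        have hsjb : SameBlock P j b :=
          sameBlock_trans (sameBlock_symm (sameBlock_iff_mem_part.2 hjT.1)) hsb
        have : b.1 - j.1 < d := by
          have h1 : a.1 < j.1 := hjT.2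
          have h2 : j.1 ≤ b.1 := hjb
          omega
        exact ReflTransGen.head harc (ih _ (hd ▸ this) j b rfl hjb hsjb)
  constructor
  · intro h
    rcases le_total a b with hab | hba
    · exact Or.inl (fwd _ a b rfl hab h)
    · exact Or.inr (fwd _ b a rfl hba (sameBlock_symm h))
  · intro h
    have : ∀ {x y : Fin N}, ReflTransGen (IsArc P) x y → SameBlock P x y := by
      intro x y h
      induction h with
      | refl => exact sameBlock_refl P x
      | tail _ hbc ih =>
        obtain ⟨_, B, hB, hb, hc, _⟩ := hbc
        exact sameBlock_trans ih ⟨B, hB, hb, hc⟩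
    rcases h with h | h
    · exact this h
    · exact sameBlock_symm (this h)
noncomputable def mkPart {N : ℕ} (s : Setoid (Fin N)) : Finpartition (Finset.univ : Finset (Fin N)) :=
  letI : DecidableRel s.r := Classical.decRel _
  Finpartition.ofSetoid s

lemma sameBlock_mkPart {N : ℕ} (s : Setoid (Fin N)) (a b : Fin N) :
    SameBlock (mkPart s) a b ↔ s.r a b := by
  letI : DecidableRel s.r := Classical.decRel _
  rw [sameBlock_iff_mem_part]
  show b ∈ (Finpartition.ofSetoid s).part a ↔ _
  exact Finpartition.mem_part_ofSetoid_iff_rel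

section Maps

variable {n : ℕ}

lemma dbl1_inj {i j : Fin n} (h : dbl1 i = dbl1 j) : i = j := by
  have := congrArg Fin.val h
  simp only [dbl1] at this
  exact Fin.ext (by omega)

lemma dbl_inj {i j : Fin n} (h : dbl i = dbl j) : i = j := by
  have := congrArg Fin.val h
  simp only [dbl] at this
  exact Fin.ext (by omega)

lemma dbl1_ne_dbl (i j : Fin n) : dbl1 i ≠ dbl j := by
  intro h
  have := congrArg Fin.val h
  simp only [dbl1, dbl] at this
  omega

lemma dbl1_lt_dbl_iff {i j : Fin n} : dbl1 i < dbl j ↔ i < j := by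
  simp only [Fin.lt_def, dbl1, dbl]; omega

lemma dbl1_le_dbl_imp {i j : Fin n} (h : dbl1 i ≤ dbl j) : i < j := by
  simp only [Fin.le_def, dbl1, dbl] at h
  exact Fin.lt_def.2 (by omega)

lemma dbl1_lt_dbl1_iff {i j : Fin n} : dbl1 i < dbl1 j ↔ i < j := by
  simp only [Fin.lt_def, dbl1]; omega

lemma dbl_lt_dbl_iff {i j : Fin n} : dbl i < dbl j ↔ i < j := by
  simp only [Fin.lt_def, dbl]; omega

lemma parity_cases (z : Fin (2 * n)) : (∃ i, z = dbl i) ∨ (∃ i, z = dbl1 i) := by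
  rcases Nat.even_or_odd z.1 with ⟨m, hm⟩ | ⟨m, hm⟩
  · exact Or.inl ⟨⟨m, by omega⟩, Fin.ext (by simp [dbl]; omega)⟩
  · exact Or.inr ⟨⟨m, by omega⟩, Fin.ext (by simp [dbl1]; omega)⟩

/-- The arc relation of the image matching. -/
def R2 (P : Finpartition (Finset.univ : Finset (Fin n))) (x y : Fin (2 * n)) : Prop :=
  ∃ i j, IsArc P i j ∧ x = dbl1 i ∧ y = dbl j

lemma good_R2 (P : Finpartition (Finset.univ : Finset (Fin n))) : GoodRel (R2 P) := by
  have hA := goodRel_isArc P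
  constructor
  · rintro a b ⟨i, j, hij, rfl, rfl⟩
    exact dbl1_lt_dbl_iff.2 hij.1
  · rintro a b b' ⟨i, j, hij, rfl, rfl⟩ ⟨i', j', hij', hi, rfl⟩
    cases dbl1_inj hi
    exact congrArg dbl (hA.fn hij hij')
  · rintro a a' b ⟨i, j, hij, rfl, rfl⟩ ⟨i', j', hij', rfl, hj⟩
    cases dbl_inj hj
    exact congrArg dbl1 (hA.inj hij hij')

lemma R2_not_comp {P : Finpartition (Finset.univ : Finset (Fin n))} {x y z : Fin (2 * n)}
    (h : R2 P x y) (h' : R2 P y z) : False := by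
  obtain ⟨i, j, _, _, rfl⟩ := h
  obtain ⟨i', j', _, hy, _⟩ := h'
  exact dbl1_ne_dbl i' j hy.symm

lemma sb_R2_iff {P : Finpartition (Finset.univ : Finset (Fin n))} {x y : Fin (2 * n)} :
    SB (R2 P) x y ↔ x = y ∨ R2 P x y ∨ R2 P y x := by
  have rtg : ∀ {a b : Fin (2 * n)}, Relation.ReflTransGen (R2 P) a b ↔ a = b ∨ R2 P a b := by
    intro a b
    constructor
    · intro h
      rcases h.cases_head with rfl | ⟨c, hac, hcb⟩
      · exact Or.inl rfl
      · rcases hcb.cases_head with rfl | ⟨d, hcd, _⟩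
        · exact Or.inr hac
        · exact absurd (R2_not_comp hac hcd) (by simp)
    · rintro (rfl | h)
      · exact Relation.ReflTransGen.refl
      · exact Relation.ReflTransGen.single h
  unfold SB
  rw [rtg, rtg, eq_comm (a := y)]
  tauto

/-- Forward map: partition of `[n]` to matching of `[2n]`. -/
noncomputable def Fwd (P : Finpartition (Finset.univ : Finset (Fin n))) :
    Finpartition (Finset.univ : Finset (Fin (2 * n))) :=
  mkPart ⟨SB (R2 P), sb_equivalence (good_R2 P)⟩

lemma sameBlock_Fwd {P : Finpartition (Finset.univ : Finset (Fin n))} {x y : Fin (2 * n)} :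
    SameBlock (Fwd P) x y ↔ x = y ∨ R2 P x y ∨ R2 P y x :=
  (sameBlock_mkPart _ x y).trans sb_R2_iff

lemma isArc_Fwd {P : Finpartition (Finset.univ : Finset (Fin n))} {a b : Fin (2 * n)} :
    IsArc (Fwd P) a b ↔ R2 P a b :=
  isArc_of_sb (good_R2 P) (fun a b => sameBlock_mkPart _ a b)

lemma card_le_two_helper {α : Type*} [DecidableEq α] {B : Finset α} {a b c : α}
    (h : B.card ≤ 2) (ha : a ∈ B) (hb : b ∈ B) (hc : c ∈ B) (hab : a ≠ b) (hac : a ≠ c) :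
    b = c := by
  by_contra hbc
  have hsub : ({a, b, c} : Finset α) ⊆ B := by
    intro x hx
    simp only [mem_insert, mem_singleton] at hx
    rcases hx with rfl | rfl | rfl <;> assumption
  have h3 : ({a, b, c} : Finset α).card = 3 := by
    rw [card_insert_of_notMem (by simp [hab, hac]), card_insert_of_notMem (by simp [hbc]),
      card_singleton]
  have := card_le_card hsub
  omega

lemma matching_Fwd (P : Finpartition (Finset.univ : Finset (Fin n))) : IsMatching (Fwd P) := by
  intro B hB
  obtain ⟨x, hx⟩ := (Fwd P).nonempty_of_mem_parts hB
  have hmem : ∀ y, y ∈ B ↔ (x = y ∨ R2 P x y ∨ R2 P y x) := by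
    intro y
    rw [← sameBlock_Fwd]
    constructor
    · intro hy; exact ⟨B, hB, hx, hy⟩
    · intro hy
      rw [sameBlock_iff_mem_part] at hy
      rwa [(Fwd P).part_eq_of_mem hB hx] at hy
  have key : ∀ y z, y ∈ B → z ∈ B → y ≠ x → z ≠ x → y = z := by
    intro y z hy hz hyx hzx
    rw [hmem] at hy hz
    rcases hy with rfl | hy | hy
    · exact absurd rfl hyx
    all_goals rcases hz with rfl | hz | hz
    · exact absurd rfl hzx
    · exact (good_R2 P).fn hy hz
    · exact absurd (R2_not_comp hz hy) (by simp)
    · exact absurd rfl hzx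
    · exact absurd (R2_not_comp hy hz) (by simp)
    · exact (good_R2 P).inj hy hz
  by_cases he : ∃ y ∈ B, y ≠ x
  · obtain ⟨w, hw, hwx⟩ := he
    have hsub : B ⊆ {x, w} := by
      intro y hy
      simp only [mem_insert, mem_singleton]
      by_cases hyx : y = x
      · exact Or.inl hyx
      · exact Or.inr (key y w hy hw hyx hwx)
    calc B.card ≤ ({x, w} : Finset _).card := card_le_card hsub
      _ ≤ ({w} : Finset _).card + 1 := card_insert_le _ _
      _ = 2 := by simp
  · push_neg at he
    have hsub : B ⊆ {x} := fun y hy => mem_singleton.2 (he y hy)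
    calc B.card ≤ ({x} : Finset _).card := card_le_card hsub
      _ ≤ 2 := by simp

end Maps
section Maps2

variable {n : ℕ}

lemma min_Fwd (P : Finpartition (Finset.univ : Finset (Fin n))) (i : Fin n) :
    dbl1 i ∈ blockMin (Fwd P) := by
  refine ⟨(Fwd P).part (dbl1 i), (Fwd P).part_mem.2 (mem_univ _), (Fwd P).mem_part (mem_univ _), ?_⟩
  intro k hk
  have : SameBlock (Fwd P) (dbl1 i) k := sameBlock_iff_mem_part.2 hk
  rw [sameBlock_Fwd] at this
  rcases this with rfl | h | h
  · exact le_refl _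
  · exact ((good_R2 P).inc h).le
  · obtain ⟨i', j', _, _, hj⟩ := h
    exact absurd hj (dbl1_ne_dbl i j')
lemma max_Fwd (P : Finpartition (Finset.univ : Finset (Fin n))) (i : Fin n) :
    dbl i ∈ blockMax (Fwd P) := by
  refine ⟨(Fwd P).part (dbl i), (Fwd P).part_mem.2 (mem_univ _), (Fwd P).mem_part (mem_univ _), ?_⟩
  intro k hk
  have : SameBlock (Fwd P) (dbl i) k := sameBlock_iff_mem_part.2 hk
  rw [sameBlock_Fwd] at this
  rcases this with rfl | h | h
  · exact le_refl _
  · obtain ⟨i', j', _, hi, _⟩ := h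
    exact absurd hi.symm (dbl1_ne_dbl i' i)
  · exact ((good_R2 P).inc h).le

/-- Arc relation extracted from a matching. -/
def R1 (M : Finpartition (Finset.univ : Finset (Fin (2 * n)))) (i j : Fin n) : Prop :=
  SameBlock M (dbl1 i) (dbl j)

variable {M : Finpartition (Finset.univ : Finset (Fin (2 * n)))}

lemma good_R1 (hM : IsMatching M)
    (hmm : ∀ i : Fin n, dbl1 i ∈ blockMin M ∧ dbl i ∈ blockMax M) : GoodRel (R1 M) := by
  constructor
  · rintro i j ⟨B, hB, h1, h2⟩
    obtain ⟨B', hB', hmem, hmin⟩ := (hmm i).1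
    have : dbl1 i ≤ dbl j := hmin (dbl j) ((M.eq_of_mem_parts hB hB' h1 hmem) ▸ h2)
    exact dbl1_le_dbl_imp this
  · rintro i j j' h h'
    have h1 : dbl j ∈ M.part (dbl1 i) := sameBlock_iff_mem_part.1 h
    have h2 : dbl j' ∈ M.part (dbl1 i) := sameBlock_iff_mem_part.1 h'
    exact dbl_inj (card_le_two_helper (hM _ (M.part_mem.2 (mem_univ _)))
      (M.mem_part (mem_univ _)) h1 h2 (dbl1_ne_dbl i j) (dbl1_ne_dbl i j'))
  · rintro i i' j h h'
    have h1 : dbl1 i ∈ M.part (dbl j) := sameBlock_iff_mem_part.1 (sameBlock_symm h)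
    have h2 : dbl1 i' ∈ M.part (dbl j) := sameBlock_iff_mem_part.1 (sameBlock_symm h')
    exact dbl1_inj (card_le_two_helper (hM _ (M.part_mem.2 (mem_univ _)))
      (M.mem_part (mem_univ _)) h1 h2 (Ne.symm (dbl1_ne_dbl i j)) (Ne.symm (dbl1_ne_dbl i' j)))

/-- Backward map: matching of `[2n]` to partition of `[n]`. -/
noncomputable def Bwd (M : Finpartition (Finset.univ : Finset (Fin (2 * n))))
    (hM : IsMatching M) (hmm : ∀ i : Fin n, dbl1 i ∈ blockMin M ∧ dbl i ∈ blockMax M) :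
    Finpartition (Finset.univ : Finset (Fin n)) :=
  mkPart ⟨SB (R1 M), sb_equivalence (good_R1 hM hmm)⟩

lemma sameBlock_Bwd {hM : IsMatching M}
    {hmm : ∀ i : Fin n, dbl1 i ∈ blockMin M ∧ dbl i ∈ blockMax M} {i j : Fin n} :
    SameBlock (Bwd M hM hmm) i j ↔ SB (R1 M) i j :=
  sameBlock_mkPart _ i j

lemma isArc_Bwd {hM : IsMatching M}
    {hmm : ∀ i : Fin n, dbl1 i ∈ blockMin M ∧ dbl i ∈ blockMax M} {i j : Fin n} :
    IsArc (Bwd M hM hmm) i j ↔ R1 M i j :=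
  isArc_of_sb (good_R1 hM hmm) (fun a b => sameBlock_mkPart _ a b)

lemma R1_Fwd (P : Finpartition (Finset.univ : Finset (Fin n))) :
    R1 (Fwd P) = IsArc P := by
  funext i j
  apply propext
  unfold R1
  rw [sameBlock_Fwd]
  constructor
  · rintro (h | ⟨i', j', h, hi, hj⟩ | ⟨i', j', _, hi, _⟩)
    · exact absurd h (dbl1_ne_dbl i j)
    · cases dbl1_inj hi; cases dbl_inj hj; exact h
    · exact absurd hi.symm (dbl1_ne_dbl i' j)
  · intro h
    exact Or.inr (Or.inl ⟨i, j, h, rfl, rfl⟩)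

lemma bwd_fwd (P : Finpartition (Finset.univ : Finset (Fin n)))
    (hM : IsMatching (Fwd P))
    (hmm : ∀ i : Fin n, dbl1 i ∈ blockMin (Fwd P) ∧ dbl i ∈ blockMax (Fwd P)) :
    Bwd (Fwd P) hM hmm = P := by
  apply eq_of_sameBlock
  intro a b
  rw [sameBlock_Bwd, sameBlock_iff_sb_isArc P a b, R1_Fwd]

lemma fwd_bwd (hM : IsMatching M)
    (hmm : ∀ i : Fin n, dbl1 i ∈ blockMin M ∧ dbl i ∈ blockMax M) :
    Fwd (Bwd M hM hmm) = M := by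
  apply eq_of_sameBlock
  intro x y
  rw [sameBlock_Fwd]
  have hR2 : ∀ x y : Fin (2 * n), R2 (Bwd M hM hmm) x y ↔
      ∃ i j, SameBlock M (dbl1 i) (dbl j) ∧ x = dbl1 i ∧ y = dbl j := by
    intro x y
    unfold R2
    constructor
    · rintro ⟨i, j, h, rfl, rfl⟩
      exact ⟨i, j, isArc_Bwd.1 h, rfl, rfl⟩
    · rintro ⟨i, j, h, rfl, rfl⟩
      exact ⟨i, j, isArc_Bwd.2 h, rfl, rfl⟩
  constructor
  · rintro (rfl | h | h)
    · exact sameBlock_refl M x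
    · obtain ⟨i, j, hsb, rfl, rfl⟩ := (hR2 _ _).1 h
      exact hsb
    · obtain ⟨i, j, hsb, rfl, rfl⟩ := (hR2 _ _).1 h
      exact sameBlock_symm hsb
  · intro hxy
    by_cases heq : x = y
    · exact Or.inl heq
    have key : ∀ a b : Fin (2 * n), SameBlock M a b → a < b →
        ∃ i j, SameBlock M (dbl1 i) (dbl j) ∧ a = dbl1 i ∧ b = dbl j := by
      intro a b hab hlt
      rcases parity_cases a with ⟨i, rfl⟩ | ⟨i, rfl⟩
      · obtain ⟨B, hB, hmem, hmax⟩ := (hmm i).2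
        obtain ⟨B', hB', h1, h2⟩ := hab
        have : b ≤ dbl i := hmax b ((M.eq_of_mem_parts hB' hB h1 hmem) ▸ h2)
        exact absurd hlt (not_lt.2 this)
      rcases parity_cases b with ⟨j, rfl⟩ | ⟨j, rfl⟩
      · exact ⟨i, j, hab, rfl, rfl⟩
      · obtain ⟨B, hB, hmem, hmin⟩ := (hmm j).1
        obtain ⟨B', hB', h1, h2⟩ := hab
        have : dbl1 j ≤ dbl1 i := hmin (dbl1 i) ((M.eq_of_mem_parts hB' hB h2 hmem) ▸ h1)
        exact absurd hlt (not_lt.2 this)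
    rcases lt_or_gt_of_ne heq with hlt | hlt
    · obtain ⟨i, j, h, rfl, rfl⟩ := key x y hxy hlt
      exact Or.inr (Or.inl ((hR2 _ _).2 ⟨i, j, h, rfl, rfl⟩))
    · obtain ⟨i, j, h, rfl, rfl⟩ := key y x (sameBlock_symm hxy) hlt
      exact Or.inr (Or.inr ((hR2 _ _).2 ⟨i, j, h, rfl, rfl⟩))

end Maps2
section Numbers

variable {n : ℕ}

lemma hasCrossingP_Fwd (P : Finpartition (Finset.univ : Finset (Fin n))) (k : ℕ) :
    HasCrossingP P k ↔ HasCrossingP (Fwd P) k := by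
  constructor
  · rintro ⟨f, g, hf, hg, hc, ha⟩
    refine ⟨fun t => dbl1 (f t), fun t => dbl (g t), ?_, ?_, ?_, ?_⟩
    · intro s t hst; exact dbl1_lt_dbl1_iff.2 (hf hst)
    · intro s t hst; exact dbl_lt_dbl_iff.2 (hg hst)
    · intro s t; exact dbl1_lt_dbl_iff.2 (hc s t)
    · intro t; exact isArc_Fwd.2 ⟨f t, g t, ha t, rfl, rfl⟩
  · rintro ⟨f, g, hf, hg, hc, ha⟩
    have h' : ∀ t, ∃ i j, IsArc P i j ∧ f t = dbl1 i ∧ g t = dbl j := fun t => isArc_Fwd.1 (ha t)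
    choose F G hFG hfF hgG using h'
    refine ⟨F, G, ?_, ?_, ?_, hFG⟩
    · intro s t hst
      have := hf hst; rw [hfF s, hfF t] at this; exact dbl1_lt_dbl1_iff.1 this
    · intro s t hst
      have := hg hst; rw [hgG s, hgG t] at this; exact dbl_lt_dbl_iff.1 this
    · intro s t
      have := hc s t; rw [hfF s, hgG t] at this; exact dbl1_lt_dbl_iff.1 this

lemma hasNestingP_Fwd (P : Finpartition (Finset.univ : Finset (Fin n))) (k : ℕ) :
    HasNestingP P k ↔ HasNestingP (Fwd P) k := by
  constructor
  · rintro ⟨f, g, hf, hg, hc, ha⟩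
    refine ⟨fun t => dbl1 (f t), fun t => dbl (g t), ?_, ?_, ?_, ?_⟩
    · intro s t hst; exact dbl1_lt_dbl1_iff.2 (hf hst)
    · intro s t hst; exact dbl_lt_dbl_iff.2 (hg hst)
    · intro s t; exact dbl1_lt_dbl_iff.2 (hc s t)
    · intro t; exact isArc_Fwd.2 ⟨f t, g t, ha t, rfl, rfl⟩
  · rintro ⟨f, g, hf, hg, hc, ha⟩
    have h' : ∀ t, ∃ i j, IsArc P i j ∧ f t = dbl1 i ∧ g t = dbl j := fun t => isArc_Fwd.1 (ha t)
    choose F G hFG hfF hgG using h'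
    refine ⟨F, G, ?_, ?_, ?_, hFG⟩
    · intro s t hst
      have := hf hst; rw [hfF s, hfF t] at this; exact dbl1_lt_dbl1_iff.1 this
    · intro s t hst
      have := hg hst; rw [hgG s, hgG t] at this; exact dbl_lt_dbl_iff.1 this
    · intro s t
      have := hc s t; rw [hfF s, hgG t] at this; exact dbl1_lt_dbl_iff.1 this

lemma crNumP_Fwd (P : Finpartition (Finset.univ : Finset (Fin n))) :
    crNumP P = crNumP (Fwd P) := by
  unfold crNumP
  congr 1
  ext k
  exact and_congr_right fun _ => hasCrossingP_Fwd P k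

lemma neNumP_Fwd (P : Finpartition (Finset.univ : Finset (Fin n))) :
    neNumP P = neNumP (Fwd P) := by
  unfold neNumP
  congr 1
  ext k
  exact and_congr_right fun _ => hasNestingP_Fwd P k

end Numbers

/-- The map `P ↦ M`, `Arc(M) = {(2i, 2j−1) : (i,j) ∈ Arc(P)}` (0-based:
`(dbl1 i, dbl j)`), is a bijection from partitions of `[n]` onto matchings `M` of
`[2n]` with `2i ∈ min(M)` and `2i−1 ∈ max(M)` for all `i ∈ [n]`, and it preserves
crossing and nesting numbers. -/
theorem stmt4 (n : ℕ) :
    ∃ e : Finpartition (Finset.univ : Finset (Fin n)) ≃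
        {M : Finpartition (Finset.univ : Finset (Fin (2 * n))) //
          IsMatching M ∧ ∀ i : Fin n, dbl1 i ∈ blockMin M ∧ dbl i ∈ blockMax M},
      ∀ P : Finpartition (Finset.univ : Finset (Fin n)),
        (∀ a b : Fin (2 * n), IsArc (e P).1 a b ↔
          ∃ i j : Fin n, IsArc P i j ∧ a = dbl1 i ∧ b = dbl j) ∧
        crNumP P = crNumP (e P).1 ∧ neNumP P = neNumP (e P).1 := by
  refine ⟨⟨fun P => ⟨Fwd P, matching_Fwd P, fun i => ⟨min_Fwd P i, max_Fwd P i⟩⟩,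
          fun M => Bwd M.1 M.2.1 M.2.2,
          fun P => bwd_fwd P _ _,
          fun M => Subtype.ext (fwd_bwd M.2.1 M.2.2)⟩, ?_⟩
  intro P
  exact ⟨fun a b => isArc_Fwd, crNumP_Fwd P, neNumP_Fwd P⟩
end

section
/- For positive integers n and r, the number of r-colored noncrossing partitions of [n] equals the number of (n−1)-step closed walks in ℕ^r starting and ending at the origin using the following (r+1)^2 steps: ±e_i for each i ∈ [r], the steps e_i − e_j for distinct i, j ∈ [r], and r+1 distinct zero steps (i.e., staying in place, counted with multiplicity r+1). -/
open Finset

namespace NCW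

variable {r m : ℕ}

def sOpens : Step r → Option (Fin r)
  | Sum.inl (i, true) => some i
  | Sum.inr (Sum.inl p) => some p.1.1
  | _ => none

def sCloses : Step r → Option (Fin r)
  | Sum.inl (i, false) => some i
  | Sum.inr (Sum.inl p) => some p.1.2
  | _ => none

def sShort {r : ℕ} : Step r → Option (Fin r)
  | Sum.inr (Sum.inr c) => if h : c.1 < r then some ⟨c.1, h⟩ else none
  | _ => none

lemma stepVec_eq (s : Step r) (c : Fin r) :
    stepVec s c = (if sOpens s = some c then 1 else 0) - (if sCloses s = some c then 1 else 0) := by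
  rcases s with ⟨i, _ | _⟩ | ⟨p, hp⟩ | z <;>
    simp [stepVec, sOpens, sCloses, eq_comm] <;> split <;> first
      | (split <;> simp_all <;> omega)
      | simp_all
      | omega
      | ring

lemma sOpens_ne_sCloses {s : Step r} {c : Fin r} (h1 : sOpens s = some c)
    (h2 : sCloses s = some c) : False := by
  rcases s with ⟨i, _ | _⟩ | ⟨p, hp⟩ | z <;> simp_all [sOpens, sCloses]
  exact hp (by rw [h1, h2])

lemma sShort_sOpens {s : Step r} {c : Fin r} (h : sShort s = some c) : sOpens s = none := by
  rcases s with ⟨i, _ | _⟩ | ⟨p, hp⟩ | z <;> simp_all [sOpens, sShort]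

lemma sShort_sCloses {s : Step r} {c : Fin r} (h : sShort s = some c) : sCloses s = none := by
  rcases s with ⟨i, _ | _⟩ | ⟨p, hp⟩ | z <;> simp_all [sCloses, sShort]

lemma walkPos_zero (w : Fin m → Step r) (c : Fin r) : walkPos w 0 c = 0 := by
  simp [walkPos]

lemma walkPos_succ (w : Fin m → Step r) (k : ℕ) (c : Fin r) :
    walkPos w (k + 1) c =
      walkPos w k c + (if h : k < m then stepVec (w ⟨k, h⟩) c else 0) := by
  unfold walkPos
  split
  · rename_i h
    rw [show (Finset.univ.filter (fun i : Fin m => i.1 < k + 1)) =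
        insert ⟨k, h⟩ (Finset.univ.filter (fun i : Fin m => i.1 < k)) by
      ext i; simp [Fin.ext_iff]; omega]
    rw [Finset.sum_insert (by simp)]
    ring
  · rename_i h
    rw [show (Finset.univ.filter (fun i : Fin m => i.1 < k + 1)) =
        (Finset.univ.filter (fun i : Fin m => i.1 < k)) by
      ext i; have := i.2; simp; omega]
    ring

lemma walkPos_of_le (w : Fin m → Step r) {k : ℕ} (h : m ≤ k) (c : Fin r) :
    walkPos w k c = walkPos w m c := by
  unfold walkPos
  congr 1
  ext i; have := i.2; simp; omega

lemma stepVec_le_one (s : Step r) (c : Fin r) : stepVec s c ≤ 1 := by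
  rw [stepVec_eq]; split <;> split <;> omega

lemma neg_one_le_stepVec (s : Step r) (c : Fin r) : -1 ≤ stepVec s c := by
  rw [stepVec_eq]; split <;> split <;> omega

lemma stepVec_eq_neg_one {s : Step r} {c : Fin r} (h : stepVec s c = -1) :
    sCloses s = some c := by
  rw [stepVec_eq] at h; split at h <;> split at h <;> first | assumption | (exfalso; omega)

lemma stepVec_eq_one {s : Step r} {c : Fin r} (h : stepVec s c = 1) :
    sOpens s = some c := by
  rw [stepVec_eq] at h; split at h <;> split at h <;> first | assumption | (exfalso; omega)

lemma sOpens_stepVec {s : Step r} {c : Fin r} (h : sOpens s = some c) : stepVec s c = 1 := by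
  rw [stepVec_eq, if_pos h, if_neg (fun h2 => sOpens_ne_sCloses h h2)]; ring

lemma sCloses_stepVec {s : Step r} {c : Fin r} (h : sCloses s = some c) : stepVec s c = -1 := by
  rw [stepVec_eq, if_neg (fun h2 => sOpens_ne_sCloses h2 h), if_pos h]; ring


section Walk

variable (w : Fin m → Step r)

def wOpens (p : ℕ) (c : Fin r) : Prop := ∃ h : p < m, sOpens (w ⟨p, h⟩) = some c

def wCloses (q : ℕ) (c : Fin r) : Prop :=
  1 ≤ q ∧ ∃ h : q - 1 < m, sCloses (w ⟨q - 1, h⟩) = some c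

def wShort (p : ℕ) (c : Fin r) : Prop := ∃ h : p < m, sShort (w ⟨p, h⟩) = some c

def wLong (p q : ℕ) (c : Fin r) : Prop :=
  p < q ∧ wOpens w p c ∧ wCloses w q c ∧ walkPos w q c = walkPos w p c ∧
    ∀ k, p < k → k < q → walkPos w p c < walkPos w k c

variable {w}

lemma wOpens_unique {p : ℕ} {c c' : Fin r} (h : wOpens w p c) (h' : wOpens w p c') : c = c' := by
  obtain ⟨hp, h⟩ := h; obtain ⟨hp', h'⟩ := h'
  rw [h] at h'; exact Option.some_inj.mp h'

lemma wCloses_unique {q : ℕ} {c c' : Fin r} (h : wCloses w q c) (h' : wCloses w q c') : c = c' := by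
  obtain ⟨h1, hp, h⟩ := h; obtain ⟨h1', hp', h'⟩ := h'
  rw [h] at h'; exact Option.some_inj.mp h'

lemma wShort_unique {p : ℕ} {c c' : Fin r} (h : wShort w p c) (h' : wShort w p c') : c = c' := by
  obtain ⟨hp, h⟩ := h; obtain ⟨hp', h'⟩ := h'
  rw [h] at h'; exact Option.some_inj.mp h'

lemma wLong_add_two {p q : ℕ} {c : Fin r} (h : wLong w p q c) : p + 2 ≤ q := by
  obtain ⟨hpq, ⟨hp, ho⟩, ⟨hq1, hq, hc⟩, _, _⟩ := h
  by_contra hlt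
  have : q = p + 1 := by omega
  subst this
  simp only [Nat.add_sub_cancel] at hc
  exact sOpens_ne_sCloses ho hc

lemma wLong_lt_m {p q : ℕ} {c : Fin r} (h : wLong w p q c) : q ≤ m := by
  obtain ⟨hpq, _, ⟨hq1, hq, _⟩, _, _⟩ := h; omega

lemma wLong_unique_right {p q q' : ℕ} {c c' : Fin r} (h : wLong w p q c)
    (h' : wLong w p q' c') : q = q' ∧ c = c' := by
  have hc : c = c' := wOpens_unique h.2.1 h'.2.1
  subst hc
  refine ⟨?_, rfl⟩
  by_contra hne
  rcases Nat.lt_or_ge q q' with hlt | hge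
  · have := h'.2.2.2.2 q h.1 hlt
    rw [h.2.2.2.1] at this; omega
  · have hlt : q' < q := by omega
    have := h.2.2.2.2 q' h'.1 hlt
    rw [h'.2.2.2.1] at this; omega

lemma wLong_unique_left {p p' q : ℕ} {c c' : Fin r} (h : wLong w p q c)
    (h' : wLong w p' q c') : p = p' ∧ c = c' := by
  have hc : c = c' := wCloses_unique h.2.2.1 h'.2.2.1
  subst hc
  refine ⟨?_, rfl⟩
  by_contra hne
  rcases Nat.lt_or_ge p p' with hlt | hge
  · have := h.2.2.2.2 p' hlt h'.1
    rw [← h'.2.2.2.1, h.2.2.2.1] at this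
    have := h'.2.2.2.1; omega
  · have hlt : p' < p := by omega
    have := h'.2.2.2.2 p hlt h.1
    rw [← h.2.2.2.1, h'.2.2.2.1] at this
    omega

/-- every opener of a closed walk has a matching closer -/
lemma wOpens_exists_wLong (hw : IsClosedWalk w) {p : ℕ} {c : Fin r}
    (ho : wOpens w p c) : ∃ q, wLong w p q c := by
  obtain ⟨hp, hop⟩ := ho
  have hQ : ∃ k, p < k ∧ walkPos w k c ≤ walkPos w p c := by
    refine ⟨m, hp, ?_⟩
    rw [hw.2 c]; exact hw.1 p c
  classical
  obtain ⟨q, hqeq⟩ : ∃ q, q = Nat.find hQ := ⟨_, rfl⟩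
  obtain ⟨hpq, hle⟩ : p < q ∧ walkPos w q c ≤ walkPos w p c := by
    rw [hqeq]; exact Nat.find_spec hQ
  have hmin : ∀ k, p < k → k < q → walkPos w p c < walkPos w k c := by
    intro k h1 h2
    have := Nat.find_min hQ (hqeq ▸ h2)
    push_neg at this
    exact this h1
  have hq2 : p + 2 ≤ q := by
    by_contra hcon
    have : q = p + 1 := by omega
    rw [this, walkPos_succ, dif_pos hp, sOpens_stepVec hop] at hle
    omega
  have hqm : q ≤ m := hqeq ▸ Nat.find_min' hQ ⟨hp, by rw [hw.2 c]; exact hw.1 p c⟩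
  have hq1 : walkPos w p c < walkPos w (q-1) c := hmin (q-1) (by omega) (by omega)
  have hstep : walkPos w q c = walkPos w (q-1) c +
      (if h : q - 1 < m then stepVec (w ⟨q-1, h⟩) c else 0) := by
    have := walkPos_succ w (q-1) c
    rw [show q - 1 + 1 = q by omega] at this; exact this
  have hq1m : q - 1 < m := by omega
  rw [dif_pos hq1m] at hstep
  have hbd := neg_one_le_stepVec (w ⟨q-1, hq1m⟩) c
  have hsv : stepVec (w ⟨q-1, hq1m⟩) c = -1 := by omega
  refine ⟨q, by omega, ⟨hp, hop⟩, ⟨by omega, hq1m, stepVec_eq_neg_one hsv⟩, by omega, hmin⟩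

/-- every closer of a closed walk has a matching opener -/
lemma wCloses_exists_wLong (hw : IsClosedWalk w) {q : ℕ} {c : Fin r}
    (hc : wCloses w q c) : ∃ p, wLong w p q c := by
  obtain ⟨hq1, hq1m, hcl⟩ := hc
  classical
  set P : ℕ → Prop := fun k => walkPos w k c ≤ walkPos w q c with hP
  have hP0 : P 0 := by rw [hP]; simp only [walkPos_zero]; exact hw.1 q c
  set p := Nat.findGreatest P (q-1) with hpdef
  have hPp : P p := Nat.findGreatest_spec (Nat.zero_le _) hP0
  have hgr : ∀ k, p < k → k ≤ q - 1 → ¬ P k := fun k h1 h2 =>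
    Nat.findGreatest_is_greatest h1 h2
  have hple : p ≤ q - 1 := Nat.findGreatest_le _
  have hmin : ∀ k, p < k → k < q → walkPos w q c < walkPos w k c := by
    intro k h1 h2
    have := hgr k h1 (by omega)
    simp only [hP, not_le] at this
    exact this
  have hstepq : walkPos w q c = walkPos w (q-1) c + stepVec (w ⟨q-1, hq1m⟩) c := by
    have := walkPos_succ w (q-1) c
    rw [show q - 1 + 1 = q by omega, dif_pos hq1m] at this; exact this
  have hsvq : stepVec (w ⟨q-1, hq1m⟩) c = -1 := sCloses_stepVec hcl
  have hp1q : p + 1 < q := by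
    by_contra hcon
    have : p = q - 1 := by omega
    rw [hP, this] at hPp
    omega
  have hplem : p < m := by omega
  have hstepp : walkPos w (p+1) c = walkPos w p c + stepVec (w ⟨p, hplem⟩) c := by
    have := walkPos_succ w p c
    rw [dif_pos hplem] at this; exact this
  have hgt : walkPos w q c < walkPos w (p+1) c := hmin (p+1) (by omega) (by omega)
  have hbd := stepVec_le_one (w ⟨p, hplem⟩) c
  have hPple : walkPos w p c ≤ walkPos w q c := hPp
  have hsv1 : stepVec (w ⟨p, hplem⟩) c = 1 := by omega
  have heq : walkPos w q c = walkPos w p c := by omega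
  refine ⟨p, by omega, ⟨hplem, stepVec_eq_one hsv1⟩, ⟨hq1, hq1m, hcl⟩, heq, ?_⟩
  intro k h1 h2
  rw [← heq]; exact hmin k h1 h2

lemma wLong_sOpens {p q : ℕ} {c : Fin r} (h : wLong w p q c) :
    ∃ hp : p < m, sOpens (w ⟨p, hp⟩) = some c := h.2.1

end Walk


section Partition

variable {n : ℕ} {P : Finpartition (Finset.univ : Finset (Fin n))}

lemma isArc_lt {i j : Fin n} (h : IsArc P i j) : i < j := h.1

lemma arc_right_unique {i j j' : Fin n} (h : IsArc P i j) (h' : IsArc P i j') : j = j' := by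
  obtain ⟨hij, B, hB, hiB, hjB, hmin⟩ := h
  obtain ⟨hij', B', hB', hiB', hjB', hmin'⟩ := h'
  have hBB : B = B' := P.eq_of_mem_parts hB hB' hiB hiB'
  subst hBB
  exact le_antisymm (hmin j' hjB' hij') (hmin' j hjB hij)

lemma arc_left_unique {i i' j : Fin n} (h : IsArc P i j) (h' : IsArc P i' j) : i = i' := by
  obtain ⟨hij, B, hB, hiB, hjB, hmin⟩ := h
  obtain ⟨hij', B', hB', hiB', hjB', hmin'⟩ := h'
  have hBB : B = B' := P.eq_of_mem_parts hB hB' hjB hjB'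
  subst hBB
  by_contra hne
  rcases lt_or_gt_of_ne hne with hlt | hlt
  · exact absurd (hmin i' hiB' hlt) (not_le.mpr hij')
  · exact absurd (hmin' i hiB hlt) (not_le.mpr hij)

def CArc {n : ℕ} (Λ : ColoredPartition n r) (c : Fin r) (i j : Fin n) : Prop :=
  ∃ h : IsArc Λ.P i j, Λ.color i j h = c

variable {Λ : ColoredPartition n r}

lemma CArc_right_unique {i j j' : Fin n} {c c' : Fin r} (h : CArc Λ c i j)
    (h' : CArc Λ c' i j') : j = j' ∧ c = c' := by
  obtain ⟨ha, hc⟩ := h; obtain ⟨ha', hc'⟩ := h'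
  have hj : j = j' := arc_right_unique ha ha'
  subst hj
  exact ⟨rfl, by rw [← hc, ← hc']⟩

lemma CArc_left_unique {i i' j : Fin n} {c c' : Fin r} (h : CArc Λ c i j)
    (h' : CArc Λ c' i' j) : i = i' ∧ c = c' := by
  obtain ⟨ha, hc⟩ := h; obtain ⟨ha', hc'⟩ := h'
  have hj : i = i' := arc_left_unique ha ha'
  subst hj
  exact ⟨rfl, by rw [← hc, ← hc']⟩

lemma crossing2 {x x' y y' : Fin n} {c : Fin r} (h1 : CArc Λ c x y) (h2 : CArc Λ c x' y')
    (hxx' : x < x') (hx'y : x' < y) (hyy' : y < y') : HasCrossing Λ 2 := by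
  refine ⟨![x, x'], ![y, y'], c, ?_, ?_, ?_, ?_⟩
  · intro s t hst
    fin_cases s <;> fin_cases t <;> simp_all <;> omega
  · intro s t hst
    fin_cases s <;> fin_cases t <;> simp_all <;> omega
  · intro s t
    fin_cases s <;> fin_cases t <;> simp <;> first
      | exact hx'y.trans hyy' | exact (hxx'.trans hx'y).trans_le (le_of_lt hyy') | exact hxx'.trans hx'y | exact hx'y
  · intro t
    fin_cases t <;> simp
    · exact h1
    · exact h2

end Partition

section Fwd

open scoped Classical

variable {n : ℕ}

noncomputable def pH (Λ : ColoredPartition n r) (c : Fin r) (k : ℕ) : ℕ :=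
  ((Finset.univ : Finset (Fin n × Fin n)).filter
    (fun z => z.1.1 < k ∧ k < z.2.1 ∧ CArc Λ c z.1 z.2)).card

def OpenP (Λ : ColoredPartition n r) (p : ℕ) (c : Fin r) : Prop :=
  ∃ x y : Fin n, x.1 = p ∧ p + 2 ≤ y.1 ∧ CArc Λ c x y

def CloseP (Λ : ColoredPartition n r) (q : ℕ) (c : Fin r) : Prop :=
  ∃ x y : Fin n, y.1 = q ∧ x.1 + 2 ≤ q ∧ CArc Λ c x y

def ShortP (Λ : ColoredPartition n r) (p : ℕ) (c : Fin r) : Prop :=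
  ∃ x y : Fin n, x.1 = p ∧ y.1 = p + 1 ∧ CArc Λ c x y

variable {Λ : ColoredPartition n r}

lemma OpenP_unique {p : ℕ} {c c' : Fin r} (h : OpenP Λ p c) (h' : OpenP Λ p c') : c = c' := by
  obtain ⟨x, y, hx, hy, hc⟩ := h
  obtain ⟨x', y', hx', hy', hc'⟩ := h'
  have : x = x' := Fin.ext (by omega)
  subst this
  exact (CArc_right_unique hc hc').2

lemma CloseP_unique {q : ℕ} {c c' : Fin r} (h : CloseP Λ q c) (h' : CloseP Λ q c') : c = c' := by
  obtain ⟨x, y, hx, hy, hc⟩ := h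
  obtain ⟨x', y', hx', hy', hc'⟩ := h'
  have : y = y' := Fin.ext (by omega)
  subst this
  exact (CArc_left_unique hc hc').2

lemma ShortP_unique {p : ℕ} {c c' : Fin r} (h : ShortP Λ p c) (h' : ShortP Λ p c') : c = c' := by
  obtain ⟨x, y, hx, hy, hc⟩ := h
  obtain ⟨x', y', hx', hy', hc'⟩ := h'
  have : x = x' := Fin.ext (by omega)
  subst this
  exact (CArc_right_unique hc hc').2

noncomputable def pOpen (Λ : ColoredPartition n r) (p : ℕ) : Option (Fin r) :=
  if h : ∃ c, OpenP Λ p c then some h.choose else none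

noncomputable def pClose (Λ : ColoredPartition n r) (q : ℕ) : Option (Fin r) :=
  if h : ∃ c, CloseP Λ q c then some h.choose else none

noncomputable def pShort (Λ : ColoredPartition n r) (p : ℕ) : Option (Fin r) :=
  if h : ∃ c, ShortP Λ p c then some h.choose else none

lemma pOpen_eq_some {p : ℕ} {c : Fin r} : pOpen Λ p = some c ↔ OpenP Λ p c := by
  unfold pOpen
  split
  · rename_i h
    simp only [Option.some_inj]
    exact ⟨fun he => he ▸ h.choose_spec, fun hc => OpenP_unique h.choose_spec hc⟩
  · rename_i h
    simp only [false_iff, reduceCtorEq]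
    exact fun hc => h ⟨c, hc⟩

lemma pClose_eq_some {q : ℕ} {c : Fin r} : pClose Λ q = some c ↔ CloseP Λ q c := by
  unfold pClose
  split
  · rename_i h
    simp only [Option.some_inj]
    exact ⟨fun he => he ▸ h.choose_spec, fun hc => CloseP_unique h.choose_spec hc⟩
  · rename_i h
    simp only [false_iff, reduceCtorEq]
    exact fun hc => h ⟨c, hc⟩

lemma pShort_eq_some {p : ℕ} {c : Fin r} : pShort Λ p = some c ↔ ShortP Λ p c := by
  unfold pShort
  split
  · rename_i h
    simp only [Option.some_inj]
    exact ⟨fun he => he ▸ h.choose_spec, fun hc => ShortP_unique h.choose_spec hc⟩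
  · rename_i h
    simp only [false_iff, reduceCtorEq]
    exact fun hc => h ⟨c, hc⟩

lemma pShort_excl {p : ℕ} (h : pShort Λ p ≠ none) :
    pOpen Λ p = none ∧ pClose Λ (p + 1) = none := by
  obtain ⟨c, hc⟩ := Option.ne_none_iff_exists'.mp h
  obtain ⟨x, y, hx, hy, harc⟩ := pShort_eq_some.mp hc
  constructor
  · rcases ho : pOpen Λ p with _ | c'
    · rfl
    · exfalso
      obtain ⟨x', y', hx', hy', harc'⟩ := pOpen_eq_some.mp ho
      have : x = x' := Fin.ext (by omega)
      subst this
      have := (CArc_right_unique harc harc').1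
      subst this
      omega
  · rcases ho : pClose Λ (p + 1) with _ | c'
    · rfl
    · exfalso
      obtain ⟨x', y', hy', hx', harc'⟩ := pClose_eq_some.mp ho
      have : y = y' := Fin.ext (by omega)
      subst this
      have := (CArc_left_unique harc harc').1
      subst this
      omega

/-- NC excludes a simultaneous open and close of the same color. -/
lemma nc_junk (hnc : ¬HasCrossing Λ 2) {k : ℕ} {c : Fin r}
    (ho : pOpen Λ k = some c) (hc : pClose Λ (k + 1) = some c) : False := by
  obtain ⟨x, y, hx, hy, harc⟩ := pOpen_eq_some.mp ho
  obtain ⟨x', y', hy', hx', harc'⟩ := pClose_eq_some.mp hc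
  exact hnc (crossing2 harc' harc (show x' < x by rw [Fin.lt_def]; omega)
    (show x < y' by rw [Fin.lt_def]; omega) (show y' < y by rw [Fin.lt_def]; omega))

def mkStep : Option (Fin r) → Option (Fin r) → Option (Fin r) → Step r
  | some c, _, _ => Sum.inr (Sum.inr c.castSucc)
  | none, some i, some j =>
      if h : i = j then Sum.inl (i, true) else Sum.inr (Sum.inl ⟨(i, j), h⟩)
  | none, some i, none => Sum.inl (i, true)
  | none, none, some j => Sum.inl (j, false)
  | none, none, none => Sum.inr (Sum.inr (Fin.last r))

lemma sShort_castSucc (c : Fin r) : sShort (Sum.inr (Sum.inr c.castSucc) : Step r) = some c := by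
  show (if h : (Fin.castSucc c).1 < r then some (⟨(Fin.castSucc c).1, h⟩ : Fin r) else none) = some c
  rw [dif_pos (by simpa using c.2)]
  simp [Fin.ext_iff]

lemma sShort_last : sShort (Sum.inr (Sum.inr (Fin.last r)) : Step r) = none := by
  show (if h : (Fin.last r).1 < r then some (⟨(Fin.last r).1, h⟩ : Fin r) else none) = none
  rw [dif_neg (by simp [Fin.last])]

lemma mkStep_sShort (o1 o2 o3 : Option (Fin r)) : sShort (mkStep o1 o2 o3) = o1 := by
  rcases o1 with _ | c
  · rcases o2 with _ | i <;> rcases o3 with _ | j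
    · exact sShort_last
    · simp [mkStep, sShort]
    · simp [mkStep, sShort]
    · show sShort (if h : i = j then (Sum.inl (i, true) : Step r) else (Sum.inr (Sum.inl ⟨(i, j), h⟩) : Step r)) = none
      by_cases h : i = j <;> simp [h, sShort]
  · exact sShort_castSucc c

lemma mkStep_sOpens (o1 o2 o3 : Option (Fin r)) (hex : o1 ≠ none → o2 = none ∧ o3 = none) :
    sOpens (mkStep o1 o2 o3) = o2 := by
  rcases o1 with _ | c
  · rcases o2 with _ | i <;> rcases o3 with _ | j
    · simp [mkStep, sOpens]
    · simp [mkStep, sOpens]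
    · simp [mkStep, sOpens]
    · show sOpens (if h : i = j then (Sum.inl (i, true) : Step r) else (Sum.inr (Sum.inl ⟨(i, j), h⟩) : Step r)) = some i
      by_cases h : i = j <;> simp [h, sOpens]
  · have := hex (by simp)
    rw [this.1]
    simp [mkStep, sOpens]

lemma mkStep_sCloses (o1 o2 o3 : Option (Fin r)) (hex : o1 ≠ none → o2 = none ∧ o3 = none)
    (hj : ∀ i, ¬(o2 = some i ∧ o3 = some i)) : sCloses (mkStep o1 o2 o3) = o3 := by
  rcases o1 with _ | c
  · rcases o2 with _ | i <;> rcases o3 with _ | j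
    · simp [mkStep, sCloses]
    · simp [mkStep, sCloses]
    · simp [mkStep, sCloses]
    · show sCloses (if h : i = j then (Sum.inl (i, true) : Step r) else (Sum.inr (Sum.inl ⟨(i, j), h⟩) : Step r)) = some j
      by_cases h : i = j
      · exact absurd ⟨rfl, by rw [h]⟩ (hj i)
      · simp [h, sCloses]
  · have := hex (by simp)
    rw [this.2]
    simp [mkStep, sCloses]

noncomputable def fwdStep (Λ : ColoredPartition n r) (k : ℕ) : Step r :=
  mkStep (pShort Λ k) (pOpen Λ k) (pClose Λ (k + 1))

lemma fwdStep_sShort (k : ℕ) : sShort (fwdStep Λ k) = pShort Λ k := mkStep_sShort _ _ _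

lemma fwdStep_sOpens (k : ℕ) : sOpens (fwdStep Λ k) = pOpen Λ k :=
  mkStep_sOpens _ _ _ (fun h => pShort_excl h)

lemma fwdStep_sCloses (hnc : ¬HasCrossing Λ 2) (k : ℕ) :
    sCloses (fwdStep Λ k) = pClose Λ (k + 1) :=
  mkStep_sCloses _ _ _ (fun h => pShort_excl h)
    (fun i hi => nc_junk hnc hi.1 hi.2)

lemma fwdStep_stepVec (hnc : ¬HasCrossing Λ 2) (k : ℕ) (c : Fin r) :
    stepVec (fwdStep Λ k) c = (if pOpen Λ k = some c then 1 else 0) -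
      (if pClose Λ (k + 1) = some c then 1 else 0) := by
  rw [stepVec_eq, fwdStep_sOpens, fwdStep_sCloses hnc]


noncomputable def cO (Λ : ColoredPartition n r) (c : Fin r) (k : ℕ) : ℕ :=
  ((Finset.univ : Finset (Fin n × Fin n)).filter
    (fun z => z.1.1 = k ∧ k + 2 ≤ z.2.1 ∧ CArc Λ c z.1 z.2)).card

noncomputable def cC (Λ : ColoredPartition n r) (c : Fin r) (k : ℕ) : ℕ :=
  ((Finset.univ : Finset (Fin n × Fin n)).filter
    (fun z => z.2.1 = k + 1 ∧ z.1.1 < k ∧ CArc Λ c z.1 z.2)).card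

lemma cO_eq (c : Fin r) (k : ℕ) : cO Λ c k = if pOpen Λ k = some c then 1 else 0 := by
  unfold cO
  split
  · rename_i h
    obtain ⟨x, y, hx, hy, hc⟩ := pOpen_eq_some.mp h
    rw [Finset.card_eq_one]
    refine ⟨(x, y), ?_⟩
    ext z
    simp only [Finset.mem_filter, Finset.mem_univ, true_and, Finset.mem_singleton]
    constructor
    · rintro ⟨hz1, hz2, hzc⟩
      have hzx : z.1 = x := Fin.ext (by omega)
      rw [hzx] at hzc
      have := (CArc_right_unique hzc hc).1
      exact Prod.ext hzx this
    · rintro rfl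
      exact ⟨hx, hy, hc⟩
  · rename_i h
    rw [Finset.card_eq_zero, Finset.eq_empty_iff_forall_notMem]
    rintro z hz
    simp only [Finset.mem_filter, Finset.mem_univ, true_and] at hz
    exact h (pOpen_eq_some.mpr ⟨z.1, z.2, hz.1, hz.2.1, hz.2.2⟩)

lemma cC_eq (c : Fin r) (k : ℕ) : cC Λ c k = if pClose Λ (k + 1) = some c then 1 else 0 := by
  unfold cC
  split
  · rename_i h
    obtain ⟨x, y, hy, hx, hc⟩ := pClose_eq_some.mp h
    rw [Finset.card_eq_one]
    refine ⟨(x, y), ?_⟩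
    ext z
    simp only [Finset.mem_filter, Finset.mem_univ, true_and, Finset.mem_singleton]
    constructor
    · rintro ⟨hz1, hz2, hzc⟩
      have hzy : z.2 = y := Fin.ext (by omega)
      rw [hzy] at hzc
      have := (CArc_left_unique hzc hc).1
      exact Prod.ext this hzy
    · rintro rfl
      refine ⟨hy, ?_, hc⟩
      show x.1 < k
      omega
  · rename_i h
    rw [Finset.card_eq_zero, Finset.eq_empty_iff_forall_notMem]
    rintro z hz
    simp only [Finset.mem_filter, Finset.mem_univ, true_and] at hz
    exact h (pClose_eq_some.mpr ⟨z.1, z.2, hz.1, by omega, hz.2.2⟩)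

lemma key_count (c : Fin r) (k : ℕ) :
    pH Λ c (k + 1) + cC Λ c k = pH Λ c k + cO Λ c k := by
  unfold pH cO cC
  rw [← Finset.card_union_of_disjoint, ← Finset.card_union_of_disjoint, ← Finset.filter_or,
    ← Finset.filter_or]
  · congr 1
    apply Finset.filter_congr
    intro z _
    by_cases hC : CArc Λ c z.1 z.2
    · have hlt : z.1.1 < z.2.1 := hC.1.1
      simp only [hC, and_true]
      omega
    · simp [hC]
  · rw [Finset.disjoint_left]
    intro z hz hz'
    simp only [Finset.mem_filter] at hz hz'
    omega
  · rw [Finset.disjoint_left]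
    intro z hz hz'
    simp only [Finset.mem_filter] at hz hz'
    omega

lemma pH_step (hnc : ¬HasCrossing Λ 2) (c : Fin r) (k : ℕ) :
    (pH Λ c (k + 1) : ℤ) = pH Λ c k + stepVec (fwdStep Λ k) c := by
  have h1 := key_count (Λ := Λ) c k
  rw [cO_eq, cC_eq] at h1
  rw [fwdStep_stepVec hnc]
  split_ifs at h1 ⊢ <;> omega

lemma pH_zero (c : Fin r) : pH Λ c 0 = 0 := by
  unfold pH
  rw [Finset.card_eq_zero, Finset.eq_empty_iff_forall_notMem]
  intro z
  simp

lemma pOpen_none_of_ge {k : ℕ} (h : n ≤ k + 2) : pOpen Λ k = none := by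
  rcases ho : pOpen Λ k with _ | c
  · rfl
  · obtain ⟨x, y, hx, hy, hc⟩ := pOpen_eq_some.mp ho
    have := y.2; omega

lemma pClose_none_of_ge {k : ℕ} (h : n ≤ k) : pClose Λ k = none := by
  rcases ho : pClose Λ k with _ | c
  · rfl
  · obtain ⟨x, y, hy, hx, hc⟩ := pClose_eq_some.mp ho
    have := y.2; omega

end Fwd

section FwdW

open scoped Classical

variable {Λ : ColoredPartition (m + 1) r}

noncomputable def fwdW (Λ : ColoredPartition (m + 1) r) : Fin m → Step r :=
  fun i => fwdStep Λ i.1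

lemma walkPos_fwdW (hnc : ¬HasCrossing Λ 2) (k : ℕ) (c : Fin r) :
    walkPos (fwdW Λ) k c = pH Λ c k := by
  induction k with
  | zero => rw [walkPos_zero, pH_zero]; simp
  | succ k ih =>
    rw [walkPos_succ, ih, pH_step hnc c k]
    split
    · rfl
    · rename_i h
      rw [fwdStep_stepVec hnc,
        pOpen_none_of_ge (by omega), pClose_none_of_ge (by omega)]
      simp

lemma pH_top (c : Fin r) : pH Λ c m = 0 := by
  unfold pH
  rw [Finset.card_eq_zero, Finset.eq_empty_iff_forall_notMem]
  intro z
  simp only [Finset.mem_filter, Finset.mem_univ, true_and, not_and]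
  intro _ h
  have := z.2.2
  omega

lemma fwdW_closed (hnc : ¬HasCrossing Λ 2) : IsClosedWalk (fwdW Λ) :=
  ⟨fun k c => by rw [walkPos_fwdW hnc]; exact Int.natCast_nonneg _,
   fun c => by rw [walkPos_fwdW hnc, pH_top]; rfl⟩


lemma wOpens_fwdW (hnc : ¬HasCrossing Λ 2) {p : ℕ} {c : Fin r} :
    wOpens (fwdW Λ) p c ↔ pOpen Λ p = some c := by
  constructor
  · rintro ⟨h, ho⟩
    rw [← fwdStep_sOpens p]
    exact ho
  · intro h
    obtain ⟨x, y, hx, hy, hc⟩ := pOpen_eq_some.mp h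
    have hym := y.2
    refine ⟨by omega, ?_⟩
    rw [show (fwdW Λ) ⟨p, by omega⟩ = fwdStep Λ p from rfl, fwdStep_sOpens]
    exact h

lemma wCloses_fwdW (hnc : ¬HasCrossing Λ 2) {q : ℕ} {c : Fin r} :
    wCloses (fwdW Λ) q c ↔ pClose Λ q = some c := by
  constructor
  · rintro ⟨hq1, h, hc⟩
    rw [show (fwdW Λ) ⟨q - 1, h⟩ = fwdStep Λ (q-1) from rfl, fwdStep_sCloses hnc,
      show q - 1 + 1 = q by omega] at hc
    exact hc
  · intro h
    obtain ⟨x, y, hy, hx, hc⟩ := pClose_eq_some.mp h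
    have hym := y.2
    refine ⟨by omega, by omega, ?_⟩
    rw [show (fwdW Λ) ⟨q - 1, by omega⟩ = fwdStep Λ (q-1) from rfl, fwdStep_sCloses hnc,
      show q - 1 + 1 = q by omega]
    exact h

lemma wShort_fwdW {p : ℕ} {c : Fin r} :
    wShort (fwdW Λ) p c ↔ pShort Λ p = some c := by
  constructor
  · rintro ⟨h, ho⟩
    rw [← fwdStep_sShort p]
    exact ho
  · intro h
    obtain ⟨x, y, hx, hy, hc⟩ := pShort_eq_some.mp h
    have hym := y.2
    refine ⟨by omega, ?_⟩
    rw [show (fwdW Λ) ⟨p, by omega⟩ = fwdStep Λ p from rfl, fwdStep_sShort]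
    exact h

lemma carc_heights (hnc : ¬HasCrossing Λ 2) {x y : Fin (m+1)} {c : Fin r}
    (h : CArc Λ c x y) :
    pH Λ c y.1 = pH Λ c x.1 ∧ ∀ k, x.1 < k → k < y.1 → pH Λ c x.1 < pH Λ c k := by
  have hxy : x.1 < y.1 := h.1.1
  constructor
  · unfold pH
    congr 1
    ext z
    simp only [Finset.mem_filter, Finset.mem_univ, true_and]
    constructor
    · rintro ⟨h1, h2, hz⟩
      refine ⟨?_, by omega, hz⟩
      have hzlt : z.1.1 < z.2.1 := hz.1.1
      by_contra hcon
      push_neg at hcon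
      have hz1x : x.1 ≤ z.1.1 := by omega
      rcases eq_or_lt_of_le hz1x with heq | hlt
      · have : x = z.1 := Fin.ext heq
        subst this
        have := (CArc_right_unique h hz).1
        subst this
        omega
      · exact hnc (crossing2 h hz (by rw [Fin.lt_def]; omega)
          (by rw [Fin.lt_def]; omega) (by rw [Fin.lt_def]; omega))
    · rintro ⟨h1, h2, hz⟩
      refine ⟨by omega, ?_, hz⟩
      have hzlt : z.1.1 < z.2.1 := hz.1.1
      by_contra hcon
      push_neg at hcon
      have : x.1 < z.2.1 := by omega
      rcases eq_or_lt_of_le (show z.2.1 ≤ y.1 by omega) with heq | hlt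
      · have : z.2 = y := Fin.ext heq
        subst this
        have := (CArc_left_unique hz h).1
        subst this
        omega
      · exact hnc (crossing2 hz h (by rw [Fin.lt_def]; omega)
          (by rw [Fin.lt_def]; omega) (by rw [Fin.lt_def]; omega))
  · intro k hk1 hk2
    unfold pH
    apply Finset.card_lt_card
    rw [Finset.ssubset_iff_of_subset]
    · refine ⟨(x, y), ?_, by simp⟩
      simp only [Finset.mem_filter, Finset.mem_univ, true_and]
      exact ⟨hk1, hk2, h⟩
    · intro z hz
      simp only [Finset.mem_filter, Finset.mem_univ, true_and] at hz ⊢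
      obtain ⟨h1, h2, hzc⟩ := hz
      refine ⟨by omega, ?_, hzc⟩
      have hzlt : z.1.1 < z.2.1 := hzc.1.1
      by_contra hcon
      push_neg at hcon
      have hz2y : z.2.1 < y.1 := by omega
      have : z.2 ≠ y := fun he => by rw [he] at hz2y; omega
      exact hnc (crossing2 hzc h (by rw [Fin.lt_def]; omega)
        (by rw [Fin.lt_def]; omega) (by rw [Fin.lt_def]; omega))

lemma carc_iff_walk (hnc : ¬HasCrossing Λ 2) {x y : Fin (m+1)} {c : Fin r} :
    CArc Λ c x y ↔
      ((y.1 = x.1 + 1 ∧ wShort (fwdW Λ) x.1 c) ∨ wLong (fwdW Λ) x.1 y.1 c) := by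
  constructor
  · intro h
    have hxy : x.1 < y.1 := h.1.1
    by_cases hs : y.1 = x.1 + 1
    · left
      refine ⟨hs, wShort_fwdW.mpr (pShort_eq_some.mpr ⟨x, y, rfl, by omega, h⟩)⟩
    · right
      have hlong : x.1 + 2 ≤ y.1 := by omega
      obtain ⟨hh, hmin⟩ := carc_heights hnc h
      refine ⟨hxy, wOpens_fwdW hnc |>.mpr (pOpen_eq_some.mpr ⟨x, y, rfl, hlong, h⟩),
        wCloses_fwdW hnc |>.mpr (pClose_eq_some.mpr ⟨x, y, rfl, hlong, h⟩), ?_, ?_⟩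
      · rw [walkPos_fwdW hnc, walkPos_fwdW hnc, hh]
      · intro k h1 h2
        rw [walkPos_fwdW hnc, walkPos_fwdW hnc]
        exact_mod_cast hmin k h1 h2
  · rintro (⟨hs, hsh⟩ | hl)
    · obtain ⟨x', y', hx', hy', hc⟩ := pShort_eq_some.mp (wShort_fwdW.mp hsh)
      have : x' = x := Fin.ext hx'
      subst this
      have : y' = y := Fin.ext (by omega)
      subst this
      exact hc
    · have ho := (wOpens_fwdW hnc).mp hl.2.1
      obtain ⟨x', y₀, hx', hy₀, hc⟩ := pOpen_eq_some.mp ho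
      have : x' = x := Fin.ext hx'
      subst this
      have hl₀ : wLong (fwdW Λ) x'.1 y₀.1 c := by
        obtain ⟨hh, hmin⟩ := carc_heights hnc hc
        refine ⟨Fin.lt_def.mp hc.1.1, (wOpens_fwdW hnc).mpr (pOpen_eq_some.mpr ⟨x', y₀, rfl, hy₀, hc⟩),
          (wCloses_fwdW hnc).mpr (pClose_eq_some.mpr ⟨x', y₀, rfl, hy₀, hc⟩),
          by rw [walkPos_fwdW hnc, walkPos_fwdW hnc, hh], ?_⟩
        intro k h1 h2
        rw [walkPos_fwdW hnc, walkPos_fwdW hnc]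
        exact_mod_cast hmin k h1 h2
      have := (wLong_unique_right hl₀ hl).1
      have : y₀ = y := Fin.ext this
      subst this
      exact hc

end FwdW

section Chain

open Relation

variable {α : Type*} {R : α → α → Prop}

/-- comparability of two points reaching a common point, for a right-unique relation -/
lemma tg_comp_right (RU : ∀ a b c, R a c → R b c → a = b) {a b u : α}
    (ha : TransGen R a u) (hb : TransGen R b u) :
    a = b ∨ TransGen R a b ∨ TransGen R b a := by
  induction hb using TransGen.head_induction_on with
  | single hbu =>
    rename_i b₀
    obtain ⟨m', ham', hm'u⟩ := TransGen.tail'_iff.mp ha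
    have : m' = b₀ := RU _ _ _ hm'u hbu
    subst this
    rcases reflTransGen_iff_eq_or_transGen.mp ham' with he | ht
    · exact Or.inl he.symm
    · exact Or.inr (Or.inl ht)
  | head hbm htg ihm =>
    rename_i b₀ mm
    rcases ihm with he | ht | ht
    · subst he
      exact Or.inr (Or.inr (TransGen.single hbm))
    · obtain ⟨m', ham', hm'm⟩ := TransGen.tail'_iff.mp ht
      have : m' = b₀ := RU _ _ _ hm'm hbm
      subst this
      rcases reflTransGen_iff_eq_or_transGen.mp ham' with he | ht2
      · exact Or.inl he.symm
      · exact Or.inr (Or.inl ht2)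
    · exact Or.inr (Or.inr (ht.head hbm))

lemma tg_comp_left (LU : ∀ a b c, R a b → R a c → b = c) {a u v : α}
    (hu : TransGen R a u) (hv : TransGen R a v) :
    u = v ∨ TransGen R u v ∨ TransGen R v u := by
  have := tg_comp_right (R := Function.swap R) (fun a b c h1 h2 => LU c a b h1 h2)
    (transGen_swap.mpr hu) (transGen_swap.mpr hv)
  rcases this with he | ht | ht
  · exact Or.inl he
  · exact Or.inr (Or.inr (transGen_swap.mp ht))
  · exact Or.inr (Or.inl (transGen_swap.mp ht))

def Ch (R : α → α → Prop) (x y : α) : Prop :=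
  x = y ∨ TransGen R x y ∨ TransGen R y x

lemma eqvGen_imp_ch (RU : ∀ a b c, R a c → R b c → a = b)
    (LU : ∀ a b c, R a b → R a c → b = c) {x y : α}
    (h : Relation.EqvGen R x y) : Ch R x y := by
  induction h with
  | rel a b hab => exact Or.inr (Or.inl (TransGen.single hab))
  | refl a => exact Or.inl rfl
  | symm a b _ ih =>
    rcases ih with he | ht | ht
    · exact Or.inl he.symm
    · exact Or.inr (Or.inr ht)
    · exact Or.inr (Or.inl ht)
  | trans a b c _ _ ih1 ih2 =>
    rcases ih1 with he | ht | ht <;> rcases ih2 with he' | ht' | ht'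
    · exact Or.inl (he.trans he')
    · subst he; exact Or.inr (Or.inl ht')
    · subst he; exact Or.inr (Or.inr ht')
    · subst he'; exact Or.inr (Or.inl ht)
    · exact Or.inr (Or.inl (ht.trans ht'))
    · rcases tg_comp_right RU ht ht' with he | h | h
      · exact Or.inl he
      · exact Or.inr (Or.inl h)
      · exact Or.inr (Or.inr h)
    · subst he'; exact Or.inr (Or.inr ht)
    · rcases tg_comp_left LU ht ht' with he | h | h
      · exact Or.inl he
      · exact Or.inr (Or.inl h)
      · exact Or.inr (Or.inr h)
    · exact Or.inr (Or.inr (ht'.trans ht))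

end Chain

section Bwd

open scoped Classical

variable {w : Fin m → Step r}

def bRel (w : Fin m → Step r) (x y : Fin (m + 1)) : Prop :=
  (y.1 = x.1 + 1 ∧ ∃ c, wShort w x.1 c) ∨ (∃ c, wLong w x.1 y.1 c)

lemma bRel_lt {x y : Fin (m + 1)} (h : bRel w x y) : x < y := by
  rw [Fin.lt_def]
  rcases h with ⟨h, _⟩ | ⟨c, hl⟩
  · omega
  · exact hl.1

lemma bRel_right_unique {x y y' : Fin (m + 1)} (h : bRel w x y) (h' : bRel w x y') : y = y' := by
  rcases h with ⟨hy, c, hs⟩ | ⟨c, hl⟩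
  · rcases h' with ⟨hy', c', hs'⟩ | ⟨c', hl'⟩
    · exact Fin.ext (by omega)
    · exfalso
      obtain ⟨hp, hss⟩ := hs
      obtain ⟨hp', hoo⟩ := hl'.2.1
      exact absurd (sShort_sOpens hss) (by rw [hoo]; simp)
  · rcases h' with ⟨hy', c', hs'⟩ | ⟨c', hl'⟩
    · exfalso
      obtain ⟨hp, hss⟩ := hs'
      obtain ⟨hp', hoo⟩ := hl.2.1
      exact absurd (sShort_sOpens hss) (by rw [hoo]; simp)
    · have hc : c = c' := wOpens_unique hl.2.1 hl'.2.1
      subst hc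
      exact Fin.ext (wLong_unique_right hl hl').1

lemma bRel_left_unique {x x' y : Fin (m + 1)} (h : bRel w x y) (h' : bRel w x' y) : x = x' := by
  rcases h with ⟨hy, c, hs⟩ | ⟨c, hl⟩
  · rcases h' with ⟨hy', c', hs'⟩ | ⟨c', hl'⟩
    · exact Fin.ext (by omega)
    · exfalso
      obtain ⟨hp, hss⟩ := hs
      obtain ⟨hq1, hp', hcc⟩ := hl'.2.2.1
      have hfe : (⟨y.1 - 1, hp'⟩ : Fin m) = ⟨x.1, by omega⟩ := Fin.ext (by
        show y.1 - 1 = x.1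
        omega)
      rw [hfe] at hcc
      exact absurd (sShort_sCloses hss) (by rw [hcc]; simp)
  · rcases h' with ⟨hy', c', hs'⟩ | ⟨c', hl'⟩
    · exfalso
      obtain ⟨hp, hss⟩ := hs'
      obtain ⟨hq1, hp', hcc⟩ := hl.2.2.1
      have hfe : (⟨y.1 - 1, hp'⟩ : Fin m) = ⟨x'.1, by omega⟩ := Fin.ext (by
        show y.1 - 1 = x'.1
        omega)
      rw [hfe] at hcc
      exact absurd (sShort_sCloses hss) (by rw [hcc]; simp)
    · have hc : c = c' := wCloses_unique hl.2.2.1 hl'.2.2.1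
      subst hc
      exact Fin.ext (wLong_unique_left hl hl').1

lemma bRel_tg_lt {x y : Fin (m + 1)} (h : Relation.TransGen (bRel w) x y) : x < y := by
  induction h with
  | single h => exact bRel_lt h
  | tail _ h ih => exact ih.trans (bRel_lt h)

noncomputable def bPart (w : Fin m → Step r) : Finpartition (Finset.univ : Finset (Fin (m + 1))) :=
  Finpartition.ofSetoid (Relation.EqvGen.setoid (bRel w))

lemma mem_bPart_iff {x y : Fin (m + 1)} :
    y ∈ (bPart w).part x ↔ Relation.EqvGen (bRel w) x y :=
  Finpartition.mem_part_ofSetoid_iff_rel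

lemma isArc_bPart_iff {x y : Fin (m + 1)} : IsArc (bPart w) x y ↔ bRel w x y := by
  constructor
  · rintro ⟨hxy, B, hB, hxB, hyB, hmin⟩
    have hBx : B = (bPart w).part x := ((bPart w).part_eq_of_mem hB hxB).symm
    subst hBx
    have hch := eqvGen_imp_ch (R := bRel w) (fun _ _ _ h1 h2 => bRel_left_unique h1 h2)
      (fun _ _ _ h1 h2 => bRel_right_unique h1 h2) (mem_bPart_iff.mp hyB)
    rcases hch with he | ht | ht
    · exact absurd he (ne_of_lt hxy)
    · obtain ⟨b', hxb', hb'y⟩ := Relation.TransGen.head'_iff.mp ht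
      have hb'B : b' ∈ (bPart w).part x := mem_bPart_iff.mpr (Relation.EqvGen.rel _ _ hxb')
      have h1 : y ≤ b' := hmin b' hb'B (bRel_lt hxb')
      have h2 : b' ≤ y := by
        rcases Relation.reflTransGen_iff_eq_or_transGen.mp hb'y with he | ht2
        · exact he.symm.le
        · exact (bRel_tg_lt ht2).le
      have : b' = y := le_antisymm h2 h1
      subst this
      exact hxb'
    · exact absurd (bRel_tg_lt ht) (not_lt.mpr hxy.le)
  · intro h
    refine ⟨bRel_lt h, (bPart w).part x, (bPart w).part_mem.mpr (Finset.mem_univ x),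
      (bPart w).mem_part (Finset.mem_univ x),
      mem_bPart_iff.mpr (Relation.EqvGen.rel _ _ h), ?_⟩
    intro k hk hxk
    have hch := eqvGen_imp_ch (R := bRel w) (fun _ _ _ h1 h2 => bRel_left_unique h1 h2)
      (fun _ _ _ h1 h2 => bRel_right_unique h1 h2) (mem_bPart_iff.mp hk)
    rcases hch with he | ht | ht
    · exact absurd he (ne_of_lt hxk)
    · obtain ⟨b', hxb', hb'k⟩ := Relation.TransGen.head'_iff.mp ht
      have : b' = y := bRel_right_unique hxb' h
      subst this
      rcases Relation.reflTransGen_iff_eq_or_transGen.mp hb'k with he | ht2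
      · exact he.symm.le
      · exact (bRel_tg_lt ht2).le
    · exact absurd (bRel_tg_lt ht) (not_lt.mpr hxk.le)


end Bwd

lemma option_ext {β : Type*} {o o' : Option β} (h : ∀ c, o = some c ↔ o' = some c) : o = o' := by
  cases o' with
  | none =>
    cases ho : o with
    | none => rfl
    | some c => exact absurd ((h c).mp ho) (by simp)
  | some c' => exact (h c').mpr rfl

section BwdC

open scoped Classical

variable {w : Fin m → Step r}

lemma bArc_color {x y : Fin (m + 1)} (h : IsArc (bPart w) x y) :
    ∃ c, (y.1 = x.1 + 1 ∧ wShort w x.1 c) ∨ wLong w x.1 y.1 c := by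
  rcases isArc_bPart_iff.mp h with ⟨hy, c, hs⟩ | ⟨c, hl⟩
  · exact ⟨c, Or.inl ⟨hy, hs⟩⟩
  · exact ⟨c, Or.inr hl⟩

noncomputable def bCP (w : Fin m → Step r) : ColoredPartition (m + 1) r :=
  ⟨bPart w, fun _ _ h => (bArc_color h).choose⟩

lemma bCP_color_spec {x y : Fin (m + 1)} (h : IsArc (bPart w) x y) :
    (y.1 = x.1 + 1 ∧ wShort w x.1 ((bCP w).color x y h)) ∨
      wLong w x.1 y.1 ((bCP w).color x y h) :=
  (bArc_color h).choose_spec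

lemma bdisj_unique {x y : Fin (m + 1)} {c c' : Fin r}
    (h : (y.1 = x.1 + 1 ∧ wShort w x.1 c) ∨ wLong w x.1 y.1 c)
    (h' : (y.1 = x.1 + 1 ∧ wShort w x.1 c') ∨ wLong w x.1 y.1 c') : c = c' := by
  rcases h with ⟨hy, hs⟩ | hl <;> rcases h' with ⟨hy', hs'⟩ | hl'
  · exact wShort_unique hs hs'
  · exact absurd (wLong_add_two hl') (by omega)
  · exact absurd (wLong_add_two hl) (by omega)
  · exact wOpens_unique hl.2.1 hl'.2.1

lemma CArc_bCP_iff {x y : Fin (m + 1)} {c : Fin r} :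
    CArc (bCP w) c x y ↔
      ((y.1 = x.1 + 1 ∧ wShort w x.1 c) ∨ wLong w x.1 y.1 c) := by
  constructor
  · rintro ⟨h, rfl⟩
    exact bCP_color_spec h
  · intro h
    have hb : bRel w x y := by
      rcases h with ⟨hy, hs⟩ | hl
      · exact Or.inl ⟨hy, c, hs⟩
      · exact Or.inr ⟨c, hl⟩
    have harc : IsArc (bPart w) x y := isArc_bPart_iff.mpr hb
    exact ⟨harc, (bdisj_unique (bCP_color_spec harc) h)⟩

lemma bCP_nc : ¬HasCrossing (bCP w) 2 := by
  rintro ⟨f, g, c, hf, hg, hfg, harc⟩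
  obtain ⟨ha0, hc0⟩ := harc 0
  obtain ⟨ha1, hc1⟩ := harc 1
  have hA0 : CArc (bCP w) c (f 0) (g 0) := ⟨ha0, hc0⟩
  have hA1 : CArc (bCP w) c (f 1) (g 1) := ⟨ha1, hc1⟩
  have hff : f 0 < f 1 := hf (show (0 : Fin 2) < 1 by decide)
  have hgg : g 0 < g 1 := hg (show (0 : Fin 2) < 1 by decide)
  have hfg10 : f 1 < g 0 := hfg 1 0
  rw [Fin.lt_def] at hff hgg hfg10
  rcases CArc_bCP_iff.mp hA0 with ⟨hy, _⟩ | hl0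
  · omega
  · rcases CArc_bCP_iff.mp hA1 with ⟨hy, _⟩ | hl1
    · have := (g 1).2
      have h1 := wLong_add_two hl0
      omega
    · have k1 := hl0.2.2.2.2 (f 1).1 hff hfg10
      have k2 := hl1.2.2.2.2 (g 0).1 hfg10 hgg
      have k3 := hl0.2.2.2.1
      omega

lemma mkStep_recover (s : Step r) : mkStep (sShort s) (sOpens s) (sCloses s) = s := by
  rcases s with ⟨i, b⟩ | ⟨⟨⟨i, j⟩, hij⟩⟩ | z
  · cases b
    · show mkStep none none (some i) = _
      rfl
    · show mkStep none (some i) none = _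
      rfl
  · show mkStep none (some i) (some j) = _
    simp only [mkStep]
    exact dif_neg hij
  · by_cases hz : z.1 < r
    · show mkStep (if h : z.1 < r then some (⟨z.1, h⟩ : Fin r) else none) none none = _
      rw [dif_pos hz]
      show Sum.inr (Sum.inr (Fin.castSucc ⟨z.1, hz⟩)) = _
      exact congrArg (fun t => Sum.inr (Sum.inr t)) (Fin.ext rfl)
    · show mkStep (if h : z.1 < r then some (⟨z.1, h⟩ : Fin r) else none) none none = _
      rw [dif_neg hz]
      show Sum.inr (Sum.inr (Fin.last r)) = _
      exact congrArg (fun t => Sum.inr (Sum.inr t))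
        (Fin.ext (by have := z.2; simp only [Fin.last]; omega))

lemma pShort_bCP (k : Fin m) :
    pShort (bCP w) k.1 = sShort (w k) := by
  apply option_ext
  intro c
  rw [pShort_eq_some]
  constructor
  · rintro ⟨x, y, hx, hy, hc⟩
    rcases CArc_bCP_iff.mp hc with ⟨_, hp, hs⟩ | hl
    · rw [show (⟨x.1, hp⟩ : Fin m) = k from Fin.ext hx] at hs
      exact hs
    · exact absurd (wLong_add_two hl) (by omega)
  · intro hs
    refine ⟨⟨k.1, by omega⟩, ⟨k.1 + 1, by have := k.2; omega⟩, rfl, rfl, ?_⟩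
    exact CArc_bCP_iff.mpr (Or.inl ⟨rfl, ⟨k.2, by simpa [Fin.eta] using hs⟩⟩)

lemma pOpen_bCP (hw : IsClosedWalk w) (k : Fin m) :
    pOpen (bCP w) k.1 = sOpens (w k) := by
  apply option_ext
  intro c
  rw [pOpen_eq_some]
  constructor
  · rintro ⟨x, y, hx, hy, hc⟩
    rcases CArc_bCP_iff.mp hc with ⟨hxy, _⟩ | hl
    · omega
    · obtain ⟨hp, ho⟩ := hl.2.1
      rw [show (⟨x.1, hp⟩ : Fin m) = k from Fin.ext hx] at ho
      exact ho
  · intro hs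
    have hop : wOpens w k.1 c := ⟨k.2, by simpa [Fin.eta] using hs⟩
    obtain ⟨q, hq⟩ := wOpens_exists_wLong hw hop
    have hq2 := wLong_add_two hq
    have hqm := wLong_lt_m hq
    refine ⟨⟨k.1, by omega⟩, ⟨q, by omega⟩, rfl, by show k.1 + 2 ≤ q; omega, ?_⟩
    exact CArc_bCP_iff.mpr (Or.inr hq)

lemma pClose_bCP (hw : IsClosedWalk w) (k : Fin m) :
    pClose (bCP w) (k.1 + 1) = sCloses (w k) := by
  apply option_ext
  intro c
  rw [pClose_eq_some]
  constructor
  · rintro ⟨x, y, hy, hx, hc⟩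
    rcases CArc_bCP_iff.mp hc with ⟨hxy, _⟩ | hl
    · omega
    · obtain ⟨hq1, hp, hcc⟩ := hl.2.2.1
      rw [show (⟨y.1 - 1, hp⟩ : Fin m) = k from Fin.ext (by show y.1 - 1 = k.1; omega)] at hcc
      exact hcc
  · intro hs
    have hcl : wCloses w (k.1 + 1) c := ⟨by omega, by
      refine ⟨by simpa using k.2, ?_⟩
      simpa [Fin.eta] using hs⟩
    obtain ⟨p, hp⟩ := wCloses_exists_wLong hw hcl
    have hp2 := wLong_add_two hp
    refine ⟨⟨p, by omega⟩, ⟨k.1 + 1, by have := k.2; omega⟩, rfl, by show p + 2 ≤ k.1 + 1; omega, ?_⟩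
    exact CArc_bCP_iff.mpr (Or.inr hp)

lemma fwdW_bCP (hw : IsClosedWalk w) : fwdW (bCP w) = w := by
  funext k
  show fwdStep (bCP w) k.1 = w k
  unfold fwdStep
  rw [pShort_bCP, pOpen_bCP hw, pClose_bCP hw]
  exact mkStep_recover (w k)

end BwdC

section PartEq

variable {n : ℕ} {P : Finpartition (Finset.univ : Finset (Fin n))}

lemma mem_part_symm {a b : Fin n} (h : b ∈ P.part a) : a ∈ P.part b := by
  have h2 : P.part b = P.part a :=
    (P.mem_part_iff_part_eq_part (Finset.mem_univ b) (Finset.mem_univ a)).mp h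
  rw [h2]
  exact P.mem_part (Finset.mem_univ a)

lemma eqvGen_arc_of_mem_part {a b : Fin n} (hab : a ≤ b) (h : b ∈ P.part a) :
    Relation.EqvGen (IsArc P) a b := by
  generalize hd : b.1 - a.1 = d
  induction d using Nat.strong_induction_on generalizing a with
  | _ d ih =>
    rcases eq_or_lt_of_le hab with rfl | hlt
    · exact Relation.EqvGen.refl a
    · have hT : b ∈ (P.part a).filter (fun k => a < k) :=
        Finset.mem_filter.mpr ⟨h, hlt⟩
      have hne : ((P.part a).filter (fun k => a < k)).Nonempty := ⟨b, hT⟩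
      set mel := ((P.part a).filter (fun k => a < k)).min' hne with hmel
      have hmem := ((P.part a).filter (fun k => a < k)).min'_mem hne
      rw [Finset.mem_filter] at hmem
      have harc : IsArc P a mel := by
        refine ⟨hmem.2, P.part a, P.part_mem.mpr (Finset.mem_univ a),
          P.mem_part (Finset.mem_univ a), hmem.1, ?_⟩
        intro k hk hak
        exact Finset.min'_le _ _ (Finset.mem_filter.mpr ⟨hk, hak⟩)
      have hmb : mel ≤ b := Finset.min'_le _ _ hT
      rcases eq_or_lt_of_le hmb with heq | hlt2
      · rw [heq] at harc
        exact Relation.EqvGen.rel _ _ harc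
      · have hbm : b ∈ P.part mel := by
          rw [P.mem_part_iff_part_eq_part (Finset.mem_univ mel) (Finset.mem_univ a) |>.mp hmem.1]
          exact h
        have hrec := ih (b.1 - mel.1)
          (by have h1 : a.1 < mel.1 := hmem.2; have h2 : mel.1 < b.1 := hlt2; omega)
          hmb hbm rfl
        exact Relation.EqvGen.trans _ _ _ (Relation.EqvGen.rel _ _ harc) hrec

lemma mem_part_iff_eqvGen {a b : Fin n} :
    b ∈ P.part a ↔ Relation.EqvGen (IsArc P) a b := by
  constructor
  · intro h
    rcases le_total a b with hab | hba
    · exact eqvGen_arc_of_mem_part hab h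
    · exact Relation.EqvGen.symm _ _ (eqvGen_arc_of_mem_part hba (mem_part_symm h))
  · intro h
    induction h with
    | rel x y hxy =>
      obtain ⟨_, B, hB, hx, hy, _⟩ := hxy
      rw [P.part_eq_of_mem hB hx]
      exact hy
    | refl x => exact P.mem_part (Finset.mem_univ x)
    | symm x y _ ih => exact mem_part_symm ih
    | trans x y z _ _ ih1 ih2 =>
      rw [P.mem_part_iff_part_eq_part (Finset.mem_univ y) (Finset.mem_univ x) |>.mp ih1] at ih2
      exact ih2

lemma finpartition_eq_of_isArc_iff {P P' : Finpartition (Finset.univ : Finset (Fin n))}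
    (h : ∀ x y, IsArc P x y ↔ IsArc P' x y) : P = P' := by
  have hIs : IsArc P = IsArc P' := by
    funext x y
    exact propext (h x y)
  have hpart : ∀ a, P.part a = P'.part a := by
    intro a
    ext b
    rw [mem_part_iff_eqvGen, mem_part_iff_eqvGen, hIs]
  have hparts : P.parts = P'.parts := by
    ext B
    constructor
    · intro hB
      obtain ⟨a, ha⟩ := P.nonempty_of_mem_parts hB
      rw [← P.part_eq_of_mem hB ha, hpart]
      exact P'.part_mem.mpr (Finset.mem_univ a)
    · intro hB
      obtain ⟨a, ha⟩ := P'.nonempty_of_mem_parts hB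
      rw [← P'.part_eq_of_mem hB ha, ← hpart]
      exact P.part_mem.mpr (Finset.mem_univ a)
  rcases P with ⟨p1, q1, q2, q3⟩
  rcases P' with ⟨p1', q1', q2', q3'⟩
  simp only at hparts
  subst hparts
  rfl

end PartEq

lemma cp_eq {n : ℕ} {Λ Λ' : ColoredPartition n r} (hP : Λ.P = Λ'.P)
    (hc : ∀ x y (h : IsArc Λ.P x y) (h' : IsArc Λ'.P x y),
      Λ.color x y h = Λ'.color x y h') : Λ = Λ' := by
  rcases Λ with ⟨P1, c1⟩
  rcases Λ' with ⟨P2, c2⟩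
  simp only at hP hc
  subst hP
  congr 1
  funext x y h
  exact hc x y h h

section Inj

open scoped Classical

variable {Λ : ColoredPartition (m + 1) r}

lemma bCP_fwdW (hnc : ¬HasCrossing Λ 2) : bCP (fwdW Λ) = Λ := by
  have harc : ∀ x y, IsArc (bPart (fwdW Λ)) x y ↔ IsArc Λ.P x y := by
    intro x y
    rw [isArc_bPart_iff]
    constructor
    · intro hb
      rcases hb with ⟨hy, c, hs⟩ | ⟨c, hl⟩
      · obtain ⟨h, _⟩ := (carc_iff_walk hnc (c := c)).mpr (Or.inl ⟨hy, hs⟩)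
        exact h
      · obtain ⟨h, _⟩ := (carc_iff_walk hnc (c := c)).mpr (Or.inr hl)
        exact h
    · intro h
      have := (carc_iff_walk hnc).mp ⟨h, rfl⟩
      rcases this with ⟨hy, hs⟩ | hl
      · exact Or.inl ⟨hy, _, hs⟩
      · exact Or.inr ⟨_, hl⟩
  have hP : (bCP (fwdW Λ)).P = Λ.P := finpartition_eq_of_isArc_iff harc
  apply cp_eq hP
  intro x y h h'
  have hdisj := bCP_color_spec (w := fwdW Λ) h
  obtain ⟨h'', hcc⟩ := (carc_iff_walk hnc).mpr hdisj
  exact hcc.symm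

end Inj

lemma key (m r : ℕ) :
    Nat.card {Λ : ColoredPartition (m + 1) r // ¬HasCrossing Λ 2} =
      Nat.card {w : Fin m → Step r // IsClosedWalk w} := by
  apply Nat.card_congr
  exact {
    toFun := fun Λ => ⟨fwdW Λ.1, fwdW_closed Λ.2⟩
    invFun := fun w => ⟨bCP w.1, bCP_nc⟩
    left_inv := fun Λ => Subtype.ext (bCP_fwdW Λ.2)
    right_inv := fun w => Subtype.ext (fwdW_bCP w.2) }

end NCW

/-- The number of `r`-colored noncrossing partitions of `[n]` equals the number of
`(n−1)`-step closed walks at the origin in `ℕ^r` with steps `±e_i`, `e_i − e_j`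
(`i ≠ j`) and `r+1` distinct zero steps. -/


theorem stmt5 (n r : ℕ) (hn : 0 < n) (hr : 0 < r) :
    Nat.card {Λ : ColoredPartition n r // ¬HasCrossing Λ 2} =
      Nat.card {w : Fin (n - 1) → Step r // IsClosedWalk w} := by
  obtain ⟨m, rfl⟩ : ∃ m, n = m + 1 := ⟨n - 1, by omega⟩
  simpa using NCW.key m r
end

section
/- For fixed positive integers j, k, n with j, k ≥ 2 and fixed subsets S, T ⊆ [n], the number NCN^{S,T}_{j,k}(n, r) of r-colored partitions Λ of [n] with cr(Λ) < j, ne(Λ) < k, min(Λ) = S, max(Λ) = T agrees, as a function of the positive integer r, with a polynomial in r with integer coefficients. -/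
open Finset

section NCNAux

variable {n : ℕ}

/-- The type of arcs of a partition. -/
def ArcT (P : Finpartition (Finset.univ : Finset (Fin n))) : Type :=
  {p : Fin n × Fin n // IsArc P p.1 p.2}

instance (P : Finpartition (Finset.univ : Finset (Fin n))) : Finite (ArcT P) := by
  unfold ArcT; infer_instance

/-- The coloring of a colored partition, as a function on the arc type. -/
def arcColor {r : ℕ} (Λ : ColoredPartition n r) : ArcT Λ.P → Fin r :=
  fun a => Λ.color a.1.1 a.1.2 a.2

/-- `m`-crossing condition expressed in terms of a setoid on the arcs. -/
def CrossKer (P : Finpartition (Finset.univ : Finset (Fin n))) (s : Setoid (ArcT P)) (m : ℕ) :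
    Prop :=
  ∃ f g : Fin m → Fin n, StrictMono f ∧ StrictMono g ∧ (∀ a b : Fin m, f a < g b) ∧
    ∃ H : ∀ t, IsArc P (f t) (g t),
      ∀ a b : Fin m, s ⟨(f a, g a), H a⟩ ⟨(f b, g b), H b⟩

/-- `m`-nesting condition expressed in terms of a setoid on the arcs. -/
def NestKer (P : Finpartition (Finset.univ : Finset (Fin n))) (s : Setoid (ArcT P)) (m : ℕ) :
    Prop :=
  ∃ f g : Fin m → Fin n, StrictMono f ∧ StrictAnti g ∧ (∀ a b : Fin m, f a < g b) ∧
    ∃ H : ∀ t, IsArc P (f t) (g t),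
      ∀ a b : Fin m, s ⟨(f a, g a), H a⟩ ⟨(f b, g b), H b⟩

/-- Good setoids: no `j`-crossing and no `k`-nesting. -/
def KerGood (j k : ℕ) (P : Finpartition (Finset.univ : Finset (Fin n)))
    (s : Setoid (ArcT P)) : Prop :=
  ¬ CrossKer P s j ∧ ¬ NestKer P s k

lemma hasCrossing_iff_crossKer {r : ℕ} (Λ : ColoredPartition n r) {m : ℕ} (hm : 0 < m) :
    HasCrossing Λ m ↔ CrossKer Λ.P (Setoid.ker (arcColor Λ)) m := by
  constructor
  · rintro ⟨f, g, c, hf, hg, hfg, hcol⟩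
    refine ⟨f, g, hf, hg, hfg, fun t => (hcol t).choose, fun a b => ?_⟩
    exact (hcol a).choose_spec.trans (hcol b).choose_spec.symm
  · rintro ⟨f, g, hf, hg, hfg, H, hrel⟩
    exact ⟨f, g, arcColor Λ ⟨(f ⟨0, hm⟩, g ⟨0, hm⟩), H ⟨0, hm⟩⟩, hf, hg, hfg,
      fun t => ⟨H t, hrel t ⟨0, hm⟩⟩⟩

lemma hasNesting_iff_nestKer {r : ℕ} (Λ : ColoredPartition n r) {m : ℕ} (hm : 0 < m) :
    HasNesting Λ m ↔ NestKer Λ.P (Setoid.ker (arcColor Λ)) m := by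
  constructor
  · rintro ⟨f, g, c, hf, hg, hfg, hcol⟩
    refine ⟨f, g, hf, hg, hfg, fun t => (hcol t).choose, fun a b => ?_⟩
    exact (hcol a).choose_spec.trans (hcol b).choose_spec.symm
  · rintro ⟨f, g, hf, hg, hfg, H, hrel⟩
    exact ⟨f, g, arcColor Λ ⟨(f ⟨0, hm⟩, g ⟨0, hm⟩), H ⟨0, hm⟩⟩, hf, hg, hfg,
      fun t => ⟨H t, hrel t ⟨0, hm⟩⟩⟩

lemma hasCrossing_le {r : ℕ} {Λ : ColoredPartition n r} {m : ℕ} (h : HasCrossing Λ m) :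
    m ≤ n := by
  obtain ⟨f, _, _, hf, _⟩ := h
  simpa using Fintype.card_le_of_injective f hf.injective

lemma hasNesting_le {r : ℕ} {Λ : ColoredPartition n r} {m : ℕ} (h : HasNesting Λ m) :
    m ≤ n := by
  obtain ⟨f, _, _, hf, _⟩ := h
  simpa using Fintype.card_le_of_injective f hf.injective

lemma hasCrossing_mono {r : ℕ} {Λ : ColoredPartition n r} {m l : ℕ} (h : HasCrossing Λ m)
    (hl : l ≤ m) : HasCrossing Λ l := by
  obtain ⟨f, g, c, hf, hg, hfg, hcol⟩ := h
  exact ⟨f ∘ Fin.castLE hl, g ∘ Fin.castLE hl, c, hf.comp (Fin.strictMono_castLE hl),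
    hg.comp (Fin.strictMono_castLE hl), fun a b => hfg _ _, fun t => hcol _⟩

lemma hasNesting_mono {r : ℕ} {Λ : ColoredPartition n r} {m l : ℕ} (h : HasNesting Λ m)
    (hl : l ≤ m) : HasNesting Λ l := by
  obtain ⟨f, g, c, hf, hg, hfg, hcol⟩ := h
  exact ⟨f ∘ Fin.castLE hl, g ∘ Fin.castLE hl, c, hf.comp (Fin.strictMono_castLE hl),
    hg.comp_strictMono (Fin.strictMono_castLE hl), fun a b => hfg _ _, fun t => hcol _⟩

lemma sSup_lt_iff_not_mem {U : Set ℕ} {j b : ℕ} (hb : ∀ m ∈ U, m ≤ b)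
    (hdc : ∀ m ∈ U, ∀ l, 0 < l → l ≤ m → l ∈ U) (hj : 0 < j) :
    sSup U < j ↔ j ∉ U := by
  constructor
  · intro h hjU
    have : j ≤ sSup U := le_csSup ⟨b, fun m hm => hb m hm⟩ hjU
    omega
  · intro hjU
    rcases U.eq_empty_or_nonempty with he | hne
    · rw [he]
      simpa using hj
    · have : sSup U ≤ j - 1 := csSup_le hne (fun m hm => by
        by_contra hmj
        exact hjU (hdc m hm j hj (by omega)))
      omega

lemma crNum_lt_iff {r : ℕ} (Λ : ColoredPartition n r) {j : ℕ} (hj : 0 < j) :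
    crNum Λ < j ↔ ¬ HasCrossing Λ j := by
  have h := sSup_lt_iff_not_mem (U := {m | 0 < m ∧ HasCrossing Λ m}) (b := n) (j := j)
    (fun m hm => hasCrossing_le hm.2)
    (fun m hm l hl hlm =>
      (show 0 < l ∧ HasCrossing Λ l from ⟨hl, hasCrossing_mono hm.2 hlm⟩)) hj
  unfold crNum
  rw [h]
  simp [hj]

lemma neNum_lt_iff {r : ℕ} (Λ : ColoredPartition n r) {k : ℕ} (hk : 0 < k) :
    neNum Λ < k ↔ ¬ HasNesting Λ k := by
  have h := sSup_lt_iff_not_mem (U := {m | 0 < m ∧ HasNesting Λ m}) (b := n) (j := k)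
    (fun m hm => hasNesting_le hm.2)
    (fun m hm l hl hlm =>
      (show 0 < l ∧ HasNesting Λ l from ⟨hl, hasNesting_mono hm.2 hlm⟩)) hk
  unfold neNum
  rw [h]
  simp [hk]

instance : Finite (Finpartition (Finset.univ : Finset (Fin n))) :=
  Finite.of_injective Finpartition.parts fun _ _ h => Finpartition.ext h

instance setoidFinite {A : Type*} [Finite A] : Finite (Setoid A) :=
  Finite.of_injective (fun s => s.r)
    fun _ _ h => Setoid.ext fun x y => iff_of_eq (congrFun (congrFun h x) y)

/-- Fiber of the kernel map, for a fixed setoid, is equivalent to embeddings of the quotient. -/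
def fiberEquiv {A β : Type*} (G : Setoid A → Prop) (s0 : {s : Setoid A // G s}) :
    {F : {F : A → β // G (Setoid.ker F)} //
        (⟨Setoid.ker F.1, F.2⟩ : {s : Setoid A // G s}) = s0} ≃ (Quotient s0.1 ↪ β) where
  toFun F := ⟨Quotient.lift F.1.1 (fun a b hab => by
      have h : Setoid.ker F.1.1 = s0.1 := congrArg Subtype.val F.2
      rw [← h] at hab
      exact hab),
    fun x y => Quotient.inductionOn₂ x y (fun a b hE => by
      have h : Setoid.ker F.1.1 = s0.1 := congrArg Subtype.val F.2
      refine Quotient.sound ?_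
      rw [← h]
      exact hE)⟩
  invFun e :=
    ⟨⟨fun a => e (Quotient.mk s0.1 a), by
        have hker : Setoid.ker (fun a => e (Quotient.mk s0.1 a)) = s0.1 :=
          Setoid.ext fun a b =>
            ⟨fun h => Quotient.exact (e.injective h), fun h => congrArg e (Quotient.sound h)⟩
        rw [hker]; exact s0.2⟩,
      Subtype.ext (Setoid.ext fun a b =>
        ⟨fun h => Quotient.exact (e.injective h), fun h => congrArg e (Quotient.sound h)⟩)⟩
  left_inv F := Subtype.ext (Subtype.ext (funext fun a => rfl))
  right_inv e := Function.Embedding.ext fun q => Quotient.inductionOn q fun a => rfl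

/-- Functions with a constraint on the kernel, as a sigma over good setoids of embeddings. -/
def kerSigmaEquiv {A β : Type*} (G : Setoid A → Prop) :
    {F : A → β // G (Setoid.ker F)} ≃ Σ s : {s : Setoid A // G s}, (Quotient s.1 ↪ β) :=
  ((Equiv.sigmaFiberEquiv (fun F : {F : A → β // G (Setoid.ker F)} =>
      (⟨Setoid.ker F.1, F.2⟩ : {s : Setoid A // G s}))).symm).trans
    (Equiv.sigmaCongrRight fun s0 => fiberEquiv G s0)

/-- Colored partitions with the crossing/nesting/min/max conditions, repackaged. -/
def colEquiv {r j k : ℕ} (hj : 0 < j) (hk : 0 < k) (S T : Set (Fin n)) :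
    {Λ : ColoredPartition n r //
        crNum Λ < j ∧ neNum Λ < k ∧ blockMin Λ.P = S ∧ blockMax Λ.P = T} ≃
      Σ P : {P : Finpartition (Finset.univ : Finset (Fin n)) //
          blockMin P = S ∧ blockMax P = T},
        {F : ArcT P.1 → Fin r // KerGood j k P.1 (Setoid.ker F)} where
  toFun Λ := ⟨⟨Λ.1.P, Λ.2.2.2.1, Λ.2.2.2.2⟩, arcColor Λ.1,
    fun hc => ((crNum_lt_iff Λ.1 hj).mp Λ.2.1) ((hasCrossing_iff_crossKer Λ.1 hj).mpr hc),
    fun hc => ((neNum_lt_iff Λ.1 hk).mp Λ.2.2.1) ((hasNesting_iff_nestKer Λ.1 hk).mpr hc)⟩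
  invFun x :=
    ⟨⟨x.1.1, fun i j h => x.2.1 ⟨(i, j), h⟩⟩,
      (crNum_lt_iff ⟨x.1.1, fun i j h => x.2.1 ⟨(i, j), h⟩⟩ hj).mpr
        (fun hc => x.2.2.1 ((hasCrossing_iff_crossKer _ hj).mp hc)),
      (neNum_lt_iff ⟨x.1.1, fun i j h => x.2.1 ⟨(i, j), h⟩⟩ hk).mpr
        (fun hc => x.2.2.2 ((hasNesting_iff_nestKer _ hk).mp hc)),
      x.1.2.1, x.1.2.2⟩
  left_inv Λ := rfl
  right_inv x := rfl

/-- The index type: pairs of an admissible partition and a good setoid on its arcs. -/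
def NCNIndex (n j k : ℕ) (S T : Set (Fin n)) : Type :=
  Σ P : {P : Finpartition (Finset.univ : Finset (Fin n)) //
      blockMin P = S ∧ blockMax P = T},
    {s : Setoid (ArcT P.1) // KerGood j k P.1 s}

instance (j k : ℕ) (S T : Set (Fin n)) : Finite (NCNIndex n j k S T) := by
  unfold NCNIndex; infer_instance

/-- The full decomposition of the set counted by `NCN`. -/
def bigEquiv {r j k : ℕ} (hj : 0 < j) (hk : 0 < k) (S T : Set (Fin n)) :
    {Λ : ColoredPartition n r //
        crNum Λ < j ∧ neNum Λ < k ∧ blockMin Λ.P = S ∧ blockMax Λ.P = T} ≃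
      Σ i : NCNIndex n j k S T, (Quotient i.2.1 ↪ Fin r) :=
  ((colEquiv hj hk S T).trans
      (Equiv.sigmaCongrRight fun P => kerSigmaEquiv (KerGood j k P.1))).trans
    (Equiv.sigmaAssoc
      (β := fun P : {P : Finpartition (Finset.univ : Finset (Fin n)) //
          blockMin P = S ∧ blockMax P = T} => {s : Setoid (ArcT P.1) // KerGood j k P.1 s})
      (fun P s => Quotient s.1 ↪ Fin r)).symm

end NCNAux

/-- `NCN^{S,T}_{j,k}(n,r)` is a polynomial in `r` with integer coefficients. -/
theorem stmt9 (n j k : ℕ) (hj : 2 ≤ j) (hk : 2 ≤ k) (S T : Set (Fin n)) :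
    ∃ p : Polynomial ℤ, ∀ r : ℕ, 0 < r →
      (Nat.card {Λ : ColoredPartition n r //
          crNum Λ < j ∧ neNum Λ < k ∧ blockMin Λ.P = S ∧ blockMax Λ.P = T} : ℤ) =
        p.eval (r : ℤ) := by
  classical
  have hj0 : 0 < j := by omega
  have hk0 : 0 < k := by omega
  haveI : Fintype (NCNIndex n j k S T) := Fintype.ofFinite _
  refine ⟨∑ i : NCNIndex n j k S T, descPochhammer ℤ (Nat.card (Quotient i.2.1)),
    fun r hr => ?_⟩
  rw [Nat.card_congr (bigEquiv hj0 hk0 S T (r := r))]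
  haveI : ∀ i : NCNIndex n j k S T, Fintype (Quotient i.2.1) := fun i => Fintype.ofFinite _
  rw [Nat.card_eq_fintype_card, Fintype.card_sigma, Polynomial.eval_finset_sum]
  push_cast
  refine Finset.sum_congr rfl fun i _ => ?_
  rw [Fintype.card_embedding_eq, Fintype.card_fin,
    descPochhammer_eval_eq_descFactorial, Nat.card_eq_fintype_card]
end

section
/- The number of partitions of [n] that are simultaneously noncrossing and nonnesting equals the Fibonacci number f_{2n−1} for all n ≥ 1, where f_1 = f_2 = 1 and f_{m+2} = f_{m+1} + f_m; equivalently, the generating function Σ_{n≥0} NCN_{2,2}(n,1) x^n equals (1−2x)/(1−3x+x²). -/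
open Finset

/-- The number of partitions of `[n]` that are both noncrossing and nonnesting. -/
noncomputable def ncn22 (n : ℕ) : ℕ :=
  Nat.card {P : Finpartition (Finset.univ : Finset (Fin n)) //
    ¬HasCrossingP P 2 ∧ ¬HasNestingP P 2}

set_option linter.unreachableTactic false
set_option linter.unusedTactic false


namespace NCNaux

def Good {n : ℕ} (S : Finset (Fin n × Fin n)) : Prop :=
  (∀ p ∈ S, p.1 < p.2) ∧ ∀ p ∈ S, ∀ q ∈ S, p ≠ q → p.2 ≤ q.1 ∨ q.2 ≤ p.1

instance {n : ℕ} : DecidablePred (Good (n := n)) := fun _ => by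
  unfold Good; infer_instance

def A (n : ℕ) : ℕ := ((univ : Finset (Finset (Fin n × Fin n))).filter Good).card

def BB (n : ℕ) : ℕ := ((univ : Finset (Finset (Fin n × Fin n) × Fin n)).filter
  (fun Sa => Good Sa.1 ∧ ∀ q ∈ Sa.1, q.2 ≤ Sa.2)).card

lemma A_zero : A 0 = 1 := by decide
lemma BB_zero : BB 0 = 0 := by decide

/-- embedding of pairs -/
def emb {n : ℕ} : Fin n × Fin n ↪ Fin (n+1) × Fin (n+1) :=
  (Fin.castSuccEmb).prodMap (Fin.castSuccEmb)

lemma emb_apply {n : ℕ} (p : Fin n × Fin n) : emb p = (p.1.castSucc, p.2.castSucc) := rfl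

lemma good_map_iff {n : ℕ} (S : Finset (Fin n × Fin n)) :
    Good (S.map emb) ↔ Good S := by
  constructor
  · rintro ⟨h1, h2⟩
    constructor
    · intro p hp
      have := h1 (emb p) (mem_map_of_mem _ hp)
      simpa [emb_apply, Fin.castSucc_lt_castSucc_iff] using this
    · intro p hp q hq hne
      have := h2 (emb p) (mem_map_of_mem _ hp) (emb q) (mem_map_of_mem _ hq)
        (fun h => hne (emb.injective h))
      simpa [emb_apply, Fin.castSucc_le_castSucc_iff] using this
  · rintro ⟨h1, h2⟩
    constructor
    · intro p hp
      obtain ⟨q, hq, rfl⟩ := mem_map.1 hp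
      simpa [emb_apply, Fin.castSucc_lt_castSucc_iff] using h1 q hq
    · intro p hp q hq hne
      obtain ⟨p', hp', rfl⟩ := mem_map.1 hp
      obtain ⟨q', hq', rfl⟩ := mem_map.1 hq
      have : p' ≠ q' := fun h => hne (by rw [h])
      simpa [emb_apply, Fin.castSucc_le_castSucc_iff] using h2 p' hp' q' hq' this


variable {n : ℕ}

lemma good_subset {S T : Finset (Fin n × Fin n)} (hST : S ⊆ T) (hT : Good T) : Good S :=
  ⟨fun p hp => hT.1 p (hST hp), fun p hp q hq hne => hT.2 p (hST hp) q (hST hq) hne⟩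

lemma inUnique {S : Finset (Fin n × Fin n)} (hS : Good S) {p q : Fin n × Fin n}
    (hp : p ∈ S) (hq : q ∈ S) (h : p.2 = q.2) : p = q := by
  by_contra hne
  rcases hS.2 p hp q hq hne with h' | h'
  · exact absurd (h ▸ h' : q.2 ≤ q.1) (not_le.2 (hS.1 q hq))
  · exact absurd (h ▸ h' : p.2 ≤ p.1) (not_le.2 (hS.1 p hp))

lemma outUnique {S : Finset (Fin n × Fin n)} (hS : Good S) {p q : Fin n × Fin n}
    (hp : p ∈ S) (hq : q ∈ S) (h : p.1 = q.1) : p = q := by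
  by_contra hne
  rcases hS.2 p hp q hq hne with h' | h'
  · exact absurd (h ▸ h' : p.2 ≤ p.1) (not_le.2 (hS.1 p hp))
  · exact absurd (h ▸ h' : q.2 ≤ q.1) (not_le.2 (hS.1 q hq))

/-- pull back a finset avoiding the last coordinate -/
def pull (S : Finset (Fin (n+1) × Fin (n+1))) : Finset (Fin n × Fin n) :=
  univ.filter (fun p => emb p ∈ S)

lemma mem_pull {S : Finset (Fin (n+1) × Fin (n+1))} {p : Fin n × Fin n} :
    p ∈ pull S ↔ emb p ∈ S := by simp [pull]

lemma map_pull {S : Finset (Fin (n+1) × Fin (n+1))}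
    (h : ∀ p ∈ S, p.2 ≠ Fin.last n) (h1 : ∀ p ∈ S, p.1 < p.2) :
    (pull S).map emb = S := by
  ext q
  simp only [mem_map, mem_pull]
  constructor
  · rintro ⟨p, hp, rfl⟩; exact hp
  · intro hq
    have hb : q.2 ≠ Fin.last n := h q hq
    have ha : q.1 ≠ Fin.last n := by
      intro h'
      exact hb (le_antisymm (Fin.le_last _) (h' ▸ (h1 q hq).le))
    obtain ⟨a, ha'⟩ := Fin.eq_castSucc_of_ne_last ha
    obtain ⟨b, hb'⟩ := Fin.eq_castSucc_of_ne_last hb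
    exact ⟨(a, b), by simp [emb_apply, ha', hb', Prod.ext_iff, hq], by
      simp [emb_apply, ha', hb', Prod.ext_iff]⟩

lemma pull_map (S : Finset (Fin n × Fin n)) : pull (S.map emb) = S := by
  ext p; simp [mem_pull]


lemma lastU {S : Finset (Fin (n+1) × Fin (n+1))} (hg : Good S)
    (hex : ∃ p ∈ S, p.2 = Fin.last n) : ∃! p, p ∈ S ∧ p.2 = Fin.last n := by
  obtain ⟨p, hp, hp2⟩ := hex
  exact ⟨p, ⟨hp, hp2⟩, fun q ⟨hq, hq2⟩ => inUnique hg hq hp (hq2.trans hp2.symm)⟩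

/-- the unique arc ending at the last point -/
def larc (S : Finset (Fin (n+1) × Fin (n+1))) (hg : Good S)
    (hex : ∃ p ∈ S, p.2 = Fin.last n) : Fin (n+1) × Fin (n+1) :=
  Finset.choose (fun p => p.2 = Fin.last n) S (lastU hg hex)

lemma larc_spec (S : Finset (Fin (n+1) × Fin (n+1))) (hg hex) :
    larc S hg hex ∈ S ∧ (larc S hg hex).2 = Fin.last n := by
  unfold larc; exact Finset.choose_spec _ _ _
lemma larc_mem (S : Finset (Fin (n+1) × Fin (n+1))) (hg hex) : larc S hg hex ∈ S :=
  (larc_spec S hg hex).1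
lemma larc_snd (S : Finset (Fin (n+1) × Fin (n+1))) (hg hex) : (larc S hg hex).2 = Fin.last n :=
  (larc_spec S hg hex).2
lemma larc_eq {S : Finset (Fin (n+1) × Fin (n+1))} (hg hex) {q : Fin (n+1) × Fin (n+1)}
    (hq : q ∈ S) (hq2 : q.2 = Fin.last n) : larc S hg hex = q :=
  ((lastU hg hex).unique (larc_spec S hg hex) ⟨hq, hq2⟩)
lemma larc_fst_ne (S : Finset (Fin (n+1) × Fin (n+1))) (hg hex) :
    (larc S hg hex).1 ≠ Fin.last n := by
  have h1 := hg.1 _ (larc_mem S hg hex)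
  have h2 := larc_snd S hg hex
  intro h
  rw [h, h2] at h1
  exact lt_irrefl _ h1

lemma card_lastfree :
    ((univ : Finset (Finset (Fin (n+1) × Fin (n+1)))).filter
      (fun S => Good S ∧ ∀ p ∈ S, p.2 ≠ Fin.last n)).card = A n := by
  refine Finset.card_bij' (fun S _ => pull S) (fun S _ => S.map emb) ?_ ?_ ?_ ?_
  · intro S hS
    simp only [mem_filter, mem_univ, true_and] at hS ⊢
    rw [← good_map_iff, map_pull hS.2 hS.1.1]
    exact hS.1
  · intro S hS
    simp only [mem_filter, mem_univ, true_and] at hS ⊢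
    refine ⟨(good_map_iff S).2 hS, ?_⟩
    intro p hp
    obtain ⟨q, _, rfl⟩ := mem_map.1 hp
    exact (Fin.castSucc_lt_last _).ne
  · intro S hS
    simp only [mem_filter, mem_univ, true_and] at hS
    exact map_pull hS.2 hS.1.1
  · intro S _
    exact pull_map S


lemma good_pull {S : Finset (Fin (n+1) × Fin (n+1))} (hg : Good S) : Good (pull S) := by
  constructor
  · intro p hp
    have := hg.1 _ (mem_pull.1 hp)
    simpa [emb_apply, Fin.castSucc_lt_castSucc_iff] using this
  · intro p hp q hq hne
    have := hg.2 _ (mem_pull.1 hp) _ (mem_pull.1 hq) (fun h => hne (emb.injective h))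
    simpa [emb_apply, Fin.castSucc_le_castSucc_iff] using this


lemma good_insert {Sa : Finset (Fin n × Fin n) × Fin n} (hg : Good Sa.1)
    (hb : ∀ q ∈ Sa.1, q.2 ≤ Sa.2) :
    Good (insert (Sa.2.castSucc, Fin.last n) (Sa.1.map emb)) := by
  constructor
  · intro p hp
    rcases mem_insert.1 hp with rfl | hp
    · exact Fin.castSucc_lt_last _
    · obtain ⟨q, hq, rfl⟩ := mem_map.1 hp
      simpa [emb_apply, Fin.castSucc_lt_castSucc_iff] using hg.1 q hq
  · intro p hp q hq hne
    rcases mem_insert.1 hp with rfl | hp' <;> rcases mem_insert.1 hq with rfl | hq'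
    · exact absurd rfl hne
    · obtain ⟨q', hq2, rfl⟩ := mem_map.1 hq'
      right
      show (emb q').2 ≤ Fin.castSucc Sa.2
      rw [emb_apply]
      exact Fin.castSucc_le_castSucc_iff.2 (hb q' hq2)
    · obtain ⟨p', hp2, rfl⟩ := mem_map.1 hp'
      left
      show (emb p').2 ≤ Fin.castSucc Sa.2
      rw [emb_apply]
      exact Fin.castSucc_le_castSucc_iff.2 (hb p' hp2)
    · obtain ⟨p', hp'', rfl⟩ := mem_map.1 hp'
      obtain ⟨q', hq'', rfl⟩ := mem_map.1 hq'
      have : p' ≠ q' := fun h => hne (by rw [h])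
      have := hg.2 p' hp'' q' hq'' this
      simpa [emb_apply, Fin.castSucc_le_castSucc_iff] using this

lemma card_last :
    ((univ : Finset (Finset (Fin (n+1) × Fin (n+1)))).filter
      (fun S => Good S ∧ ∃ p ∈ S, p.2 = Fin.last n)).card = BB n := by
  refine Finset.card_bij'
    (fun S hS => (pull S,
      Fin.castPred (larc S (mem_filter.1 hS).2.1 (mem_filter.1 hS).2.2).1
        (larc_fst_ne S (mem_filter.1 hS).2.1 (mem_filter.1 hS).2.2)))
    (fun Sa _ => insert (Sa.2.castSucc, Fin.last n) (Sa.1.map emb)) ?_ ?_ ?_ ?_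
  · -- i maps into BB set
    intro S hS
    obtain ⟨-, hg, hex⟩ := mem_filter.1 hS
    have hp₀mem := larc_mem S hg hex
    have hp₀snd := larc_snd S hg hex
    simp only [BB, mem_filter, mem_univ, true_and]
    refine ⟨good_pull hg, ?_⟩
    intro q hq
    have hqS := mem_pull.1 hq
    have hne : emb q ≠ larc S hg hex := by
      intro h
      have : (emb q).2 = Fin.last n := by rw [h, hp₀snd]
      exact (Fin.castSucc_lt_last q.2).ne this
    rcases hg.2 _ hqS _ hp₀mem hne with h | h
    · rw [← Fin.castSucc_le_castSucc_iff, Fin.castSucc_castPred]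
      exact h
    · exfalso
      rw [hp₀snd] at h
      exact (Fin.castSucc_lt_last q.1).not_ge h
  · -- j maps into filter set
    intro Sa hSa
    simp only [BB, mem_filter, mem_univ, true_and] at hSa
    obtain ⟨hg, hb⟩ := hSa
    simp only [mem_filter, mem_univ, true_and]
    exact ⟨good_insert hg hb, ⟨(Sa.2.castSucc, Fin.last n), mem_insert_self _ _, rfl⟩⟩
  · -- left inverse : j (i S) = S
    intro S hS
    obtain ⟨-, hg, hex⟩ := mem_filter.1 hS
    have hp₀mem := larc_mem S hg hex
    have hp₀snd := larc_snd S hg hex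
    show insert (Fin.castSucc (Fin.castPred (larc S hg hex).1 (larc_fst_ne S hg hex)),
      Fin.last n) ((pull S).map emb) = S
    rw [Fin.castSucc_castPred]
    have hmap : (pull S).map emb = S.erase (larc S hg hex) := by
      have h2 : ∀ p ∈ S.erase (larc S hg hex), p.2 ≠ Fin.last n := by
        intro p hp h
        exact (mem_erase.1 hp).1 (larc_eq hg hex (mem_erase.1 hp).2 h).symm
      have h1 : ∀ p ∈ S.erase (larc S hg hex), p.1 < p.2 :=
        fun p hp => hg.1 p (mem_erase.1 hp).2
      rw [← map_pull h2 h1]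
      congr 1
      ext p
      simp only [mem_pull, mem_erase]
      constructor
      · intro h
        refine ⟨?_, h⟩
        intro h'
        exact (Fin.castSucc_lt_last p.2).ne ((congrArg Prod.snd h').trans hp₀snd)
      · exact fun h => h.2
    rw [hmap]
    have heta : (((larc S hg hex).1), Fin.last n) = larc S hg hex := by
      rw [← hp₀snd]
    rw [heta, insert_erase hp₀mem]
  · -- right inverse : i (j Sa) = Sa
    intro Sa hSa
    simp only [BB, mem_filter, mem_univ, true_and] at hSa
    obtain ⟨hg, hb⟩ := hSa
    refine Prod.ext_iff.mpr ⟨?_, ?_⟩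
    · show pull (insert (Sa.2.castSucc, Fin.last n) (Sa.1.map emb)) = Sa.1
      ext p
      simp only [mem_pull, mem_insert, Finset.mem_map']
      constructor
      · rintro (h | h)
        · exact absurd (congrArg Prod.snd h) (Fin.castSucc_lt_last p.2).ne
        · exact h
      · exact fun h => Or.inr h
    · have h1 := larc_eq (S := insert (Sa.2.castSucc, Fin.last n) (Sa.1.map emb))
        (good_insert hg hb) ⟨_, mem_insert_self _ _, rfl⟩ (mem_insert_self _ _) rfl
      simp only [h1]
      exact Fin.castPred_castSucc

variable {n : ℕ}

lemma A_succ : A (n + 1) = A n + BB n := by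
  classical
  have hsplit := Finset.card_filter_add_card_filter_not
    (s := (univ : Finset (Finset (Fin (n+1) × Fin (n+1)))).filter Good)
    (p := fun S => ∀ p ∈ S, p.2 ≠ Fin.last n)
  rw [A, ← hsplit, filter_filter, filter_filter]
  congr 1
  · exact card_lastfree
  · rw [← card_last]
    congr 1
    apply filter_congr
    intro S _
    constructor
    · rintro ⟨hg, h⟩
      push_neg at h
      exact ⟨hg, h⟩
    · rintro ⟨hg, h⟩
      refine ⟨hg, ?_⟩
      push_neg
      exact h

lemma BB_succ : BB (n + 1) = A (n + 1) + BB n := by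
  classical
  have hsplit := Finset.card_filter_add_card_filter_not
    (s := (univ : Finset (Finset (Fin (n+1) × Fin (n+1)) × Fin (n+1))).filter
      (fun Sa => Good Sa.1 ∧ ∀ q ∈ Sa.1, q.2 ≤ Sa.2))
    (p := fun Sa => Sa.2 = Fin.last n)
  rw [BB, ← hsplit, filter_filter, filter_filter]
  congr 1
  · -- a = last : count = A (n+1)
    refine Finset.card_bij' (fun Sa _ => Sa.1) (fun S _ => (S, Fin.last n)) ?_ ?_ ?_ ?_
    · intro Sa hSa
      simp only [mem_filter, mem_univ, true_and] at hSa ⊢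
      exact hSa.1.1
    · intro S hS
      simp only [mem_filter, mem_univ, true_and] at hS
      exact mem_filter.2 ⟨mem_univ _, ⟨hS, fun q _ => Fin.le_last _⟩, rfl⟩
    · intro Sa hSa
      simp only [mem_filter, mem_univ, true_and] at hSa
      have h2 : Sa.2 = Fin.last n := hSa.2
      show (Sa.1, Fin.last n) = Sa
      rw [← h2]
    · intro S _
      rfl
  · -- a < last : count = BB n
    refine Finset.card_bij'
      (fun Sa hSa => (pull Sa.1, Sa.2.castPred (by
        simp only [mem_filter, mem_univ, true_and] at hSa
        exact hSa.2)))
      (fun Sa _ => (Sa.1.map emb, Sa.2.castSucc)) ?_ ?_ ?_ ?_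
    · intro Sa hSa
      simp only [mem_filter, mem_univ, true_and, BB] at hSa ⊢
      obtain ⟨⟨hg, hb⟩, hne⟩ := hSa
      refine ⟨good_pull hg, ?_⟩
      intro q hq
      have hqS := mem_pull.1 hq
      have := hb _ hqS
      rw [← Fin.castSucc_le_castSucc_iff, Fin.castSucc_castPred]
      exact this
    · intro Sa hSa
      simp only [mem_filter, mem_univ, true_and, BB] at hSa ⊢
      obtain ⟨hg, hb⟩ := hSa
      refine ⟨⟨(good_map_iff _).2 hg, ?_⟩, (Fin.castSucc_lt_last _).ne⟩
      intro q hq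
      obtain ⟨q', hq', rfl⟩ := mem_map.1 hq
      show (emb q').2 ≤ _
      rw [emb_apply]
      exact Fin.castSucc_le_castSucc_iff.2 (hb q' hq')
    · intro Sa hSa
      simp only [mem_filter, mem_univ, true_and] at hSa
      obtain ⟨⟨hg, hb⟩, hne⟩ := hSa
      refine Prod.ext_iff.mpr ⟨?_, ?_⟩
      · show (pull Sa.1).map emb = Sa.1
        apply map_pull
        · intro p hp h
          have := hb p hp
          rw [h] at this
          exact hne (le_antisymm (Fin.le_last _) this)
        · exact hg.1
      · exact Fin.castSucc_castPred _ hne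
    · intro Sa hSa
      refine Prod.ext_iff.mpr ⟨?_, ?_⟩
      · exact pull_map _
      · exact Fin.castPred_castSucc

lemma A_one : A 1 = 1 := by rw [A_succ, A_zero, BB_zero]

lemma A_fib : ∀ n : ℕ, A (n + 1) = Nat.fib (2 * n + 1) ∧ BB (n + 1) = Nat.fib (2 * n + 2) := by
  intro n
  induction n with
  | zero =>
    constructor
    · rw [A_succ, A_zero, BB_zero]
      norm_num [Nat.fib_one]
    · rw [BB_succ, A_succ, A_zero, BB_zero]
      norm_num [Nat.fib_two]
  | succ m ih =>
    obtain ⟨ha, hb⟩ := ih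
    have e1 := Nat.fib_add_two (n := 2*m+1)
    have e2 := Nat.fib_add_two (n := 2*m+2)
    simp only [show 2*m+1+2 = 2*m+3 from by ring, show 2*m+1+1 = 2*m+2 from by ring,
      show 2*m+2+2 = 2*m+4 from by ring, show 2*m+2+1 = 2*m+3 from by ring] at e1 e2
    constructor
    · rw [A_succ, ha, hb, show 2*(m+1)+1 = 2*m+3 from by ring]
      omega
    · rw [BB_succ, A_succ, ha, hb, show 2*(m+1)+2 = 2*m+4 from by ring]
      omega

lemma A_rec (n : ℕ) : A (n + 2) + A n = 3 * A (n + 1) := by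
  rw [A_succ, BB_succ, A_succ]
  have h := A_succ (n := n)
  omega


end NCNaux

namespace NCNaux

variable {n : ℕ}

instance decIsArc (P : Finpartition (Finset.univ : Finset (Fin n))) (i j : Fin n) :
    Decidable (IsArc P i j) := by unfold IsArc; infer_instance

/-- the set of arcs of a partition -/
def arcFinset (P : Finpartition (Finset.univ : Finset (Fin n))) : Finset (Fin n × Fin n) :=
  univ.filter (fun p => IsArc P p.1 p.2)

lemma mem_arcFinset {P : Finpartition (Finset.univ : Finset (Fin n))} {p : Fin n × Fin n} :
    p ∈ arcFinset P ↔ IsArc P p.1 p.2 := by simp [arcFinset]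

variable {P : Finpartition (Finset.univ : Finset (Fin n))}

lemma arc_out_unique {i j j' : Fin n} (h : IsArc P i j) (h' : IsArc P i j') : j = j' := by
  obtain ⟨hij, B, hB, hiB, hjB, hmin⟩ := h
  obtain ⟨hij', B', hB', hiB', hjB', hmin'⟩ := h'
  obtain rfl : B = B' := P.eq_of_mem_parts hB hB' hiB hiB'
  exact le_antisymm (hmin j' hjB' hij') (hmin' j hjB hij)

lemma arc_in_unique {i i' j : Fin n} (h : IsArc P i j) (h' : IsArc P i' j) : i = i' := by
  obtain ⟨hij, B, hB, hiB, hjB, hmin⟩ := h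
  obtain ⟨hij', B', hB', hiB', hjB', hmin'⟩ := h'
  obtain rfl : B = B' := P.eq_of_mem_parts hB hB' hjB hjB'
  rcases lt_trichotomy i i' with hlt | heq | hlt
  · exact absurd (hmin i' hiB' hlt) (not_le.2 hij')
  · exact heq
  · exact absurd (hmin' i hiB hlt) (not_le.2 hij)

/-- arc relation -/
def arcR (P : Finpartition (Finset.univ : Finset (Fin n))) : Fin n → Fin n → Prop :=
  fun a b => IsArc P a b

lemma part_eq_of_arc {i j : Fin n} (h : IsArc P i j) : P.part i = P.part j := by
  obtain ⟨_, B, hB, hiB, hjB, _⟩ := h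
  rw [P.part_eq_of_mem hB hiB, P.part_eq_of_mem hB hjB]

lemma part_eq_of_transGen {i j : Fin n} (h : Relation.TransGen (arcR P) i j) :
    P.part i = P.part j := by
  induction h with
  | single h => exact part_eq_of_arc h
  | tail _ h ih => exact ih.trans (part_eq_of_arc h)

lemma transGen_arcR_lt {i j : Fin n} (h : Relation.TransGen (arcR P) i j) : i < j := by
  induction h with
  | single h => exact h.1
  | tail _ h ih => exact ih.trans h.1

lemma transGen_of_part_eq : ∀ (d : ℕ) (i j : Fin n), j.1 - i.1 ≤ d → i < j →
    P.part i = P.part j → Relation.TransGen (arcR P) i j := by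
  intro d
  induction d with
  | zero =>
    intro i j hd hij _
    exact absurd hij (by intro h; exact absurd h.le (by omega))
  | succ d ih =>
    intro i j hd hij hpart
    have hiu : i ∈ (univ : Finset (Fin n)) := mem_univ i
    have hB : P.part i ∈ P.parts := P.part_mem.2 hiu
    have hiB : i ∈ P.part i := P.mem_part hiu
    have hjB : j ∈ P.part i := by rw [hpart]; exact P.mem_part (mem_univ j)
    set C := (P.part i).filter (fun k => i < k) with hC
    have hjC : j ∈ C := mem_filter.2 ⟨hjB, hij⟩
    have hCne : C.Nonempty := ⟨j, hjC⟩
    set j' := C.min' hCne with hj'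
    have hj'C : j' ∈ C := C.min'_mem hCne
    have hj'B : j' ∈ P.part i := (mem_filter.1 hj'C).1
    have hij' : i < j' := (mem_filter.1 hj'C).2
    have harc : IsArc P i j' := by
      refine ⟨hij', P.part i, hB, hiB, hj'B, ?_⟩
      intro k hk hik
      exact C.min'_le k (mem_filter.2 ⟨hk, hik⟩)
    have hj'j : j' ≤ j := C.min'_le j hjC
    rcases eq_or_lt_of_le hj'j with rfl | hlt
    · exact Relation.TransGen.single harc
    · have hpart' : P.part j' = P.part j := by
        rw [← hpart, P.part_eq_of_mem hB hj'B]
      have hd' : j.1 - j'.1 ≤ d := by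
        have := hij'
        have h1 : i.1 < j'.1 := this
        omega
      exact Relation.TransGen.head harc (ih j' j hd' hlt hpart')

lemma part_eq_iff {i j : Fin n} :
    P.part i = P.part j ↔
      (i = j ∨ Relation.TransGen (arcR P) i j ∨ Relation.TransGen (arcR P) j i) := by
  constructor
  · intro h
    rcases lt_trichotomy i j with hlt | heq | hlt
    · exact Or.inr (Or.inl (transGen_of_part_eq _ i j le_rfl hlt h))
    · exact Or.inl heq
    · exact Or.inr (Or.inr (transGen_of_part_eq _ j i le_rfl hlt h.symm))
  · rintro (rfl | h | h)
    · rfl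
    · exact part_eq_of_transGen h
    · exact (part_eq_of_transGen h).symm

end NCNaux

namespace NCNaux

variable {n : ℕ} {P : Finpartition (Finset.univ : Finset (Fin n))}

lemma strictMono_pair {a b : Fin n} (h : a < b) : StrictMono ![a, b] := by
  intro s t hst
  fin_cases s <;> fin_cases t <;>
    simp_all [Matrix.cons_val_zero, Matrix.cons_val_one, Matrix.head_cons] <;> omega

lemma strictAnti_pair {a b : Fin n} (h : b < a) : StrictAnti ![a, b] := by
  intro s t hst
  fin_cases s <;> fin_cases t <;>
    simp_all [Matrix.cons_val_zero, Matrix.cons_val_one, Matrix.head_cons] <;> omega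

lemma noCN_iff :
    (¬HasCrossingP P 2 ∧ ¬HasNestingP P 2) ↔ Good (arcFinset P) := by
  constructor
  · rintro ⟨hcr, hne⟩
    refine ⟨fun p hp => (mem_arcFinset.1 hp).1, ?_⟩
    intro p hp q hq hpq
    have hparc := mem_arcFinset.1 hp
    have hqarc := mem_arcFinset.1 hq
    -- key step : two arcs with interleaved endpoints give crossing or nesting
    have key : ∀ p q : Fin n × Fin n, IsArc P p.1 p.2 → IsArc P q.1 q.2 →
        p.1 < q.1 → q.1 < p.2 → False := by
      intro p q hparc hqarc h1 h2
      have hne2 : p.2 ≠ q.2 := by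
        intro h
        exact absurd (arc_in_unique (h ▸ hparc) hqarc) h1.ne
      rcases lt_or_gt_of_ne hne2 with hlt | hlt
      · -- p.2 < q.2 : crossing
        apply hcr
        refine ⟨![p.1, q.1], ![p.2, q.2], strictMono_pair h1, strictMono_pair hlt, ?_, ?_⟩
        · intro s t
          fin_cases s <;> fin_cases t <;>
            simp [Matrix.cons_val_zero, Matrix.cons_val_one, Matrix.head_cons]
          · exact hparc.1
          · exact h1.trans hqarc.1
          · exact h2
          · exact hqarc.1
        · intro t
          fin_cases t
          · simpa using hparc
          · simpa using hqarc
      · -- q.2 < p.2 : nesting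
        apply hne
        refine ⟨![p.1, q.1], ![p.2, q.2], strictMono_pair h1, strictAnti_pair hlt, ?_, ?_⟩
        · intro s t
          fin_cases s <;> fin_cases t <;>
            simp [Matrix.cons_val_zero, Matrix.cons_val_one, Matrix.head_cons]
          · exact hparc.1
          · exact h1.trans hqarc.1
          · exact hqarc.1.trans hlt
          · exact hqarc.1
        · intro t
          fin_cases t
          · simpa using hparc
          · simpa using hqarc
    rcases lt_trichotomy p.1 q.1 with h1 | h1 | h1
    · left
      by_contra h2
      exact key p q hparc hqarc h1 (not_le.1 h2)
    · exfalso
      apply hpq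
      have h2 := arc_out_unique (h1 ▸ hparc) hqarc
      exact Prod.ext_iff.mpr ⟨h1, h2⟩
    · right
      by_contra h2
      exact key q p hqarc hparc h1 (not_le.1 h2)
  · rintro ⟨hlt, hchain⟩
    have key : ∀ (f g : Fin 2 → Fin n), IsArc P (f 0) (g 0) → IsArc P (f 1) (g 1) →
        f 0 < f 1 → f 1 < g 0 → f 0 < g 1 → False := by
      intro f g h0 h1 hf h10 h01
      have hp : (f 0, g 0) ∈ arcFinset P := mem_arcFinset.2 h0
      have hq : (f 1, g 1) ∈ arcFinset P := mem_arcFinset.2 h1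
      have hne : ((f 0 : Fin n), g 0) ≠ (f 1, g 1) := by
        intro h
        exact hf.ne (congrArg Prod.fst h)
      rcases hchain _ hp _ hq hne with h | h
      · exact absurd h (not_le.2 h10)
      · exact absurd h (not_le.2 h01)
    constructor
    · rintro ⟨f, g, hf, hg, hfg, harc⟩
      exact key f g (harc 0) (harc 1) (hf (by norm_num : (0 : Fin 2) < 1))
        (hfg 1 0) (hfg 0 1)
    · rintro ⟨f, g, hf, hg, hfg, harc⟩
      exact key f g (harc 0) (harc 1) (hf (by norm_num : (0 : Fin 2) < 1))
        (hfg 1 0) (hfg 0 1)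

end NCNaux

namespace NCNaux

variable {n : ℕ}

/-- the step relation of an arc set -/
def sRel (S : Finset (Fin n × Fin n)) : Fin n → Fin n → Prop := fun a b => (a, b) ∈ S

lemma casesHead {R : Fin n → Fin n → Prop} {a b : Fin n} (h : Relation.TransGen R a b) :
    R a b ∨ ∃ c, R a c ∧ Relation.TransGen R c b := by
  obtain ⟨c, hac, hcb⟩ := Relation.TransGen.head'_iff.1 h
  rcases Relation.reflTransGen_iff_eq_or_transGen.1 hcb with rfl | h'
  · exact Or.inl hac
  · exact Or.inr ⟨c, hac, h'⟩

lemma sOut {S : Finset (Fin n × Fin n)} (hS : Good S) {a b c : Fin n}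
    (h1 : sRel S a b) (h2 : sRel S a c) : b = c :=
  congrArg Prod.snd (outUnique hS h1 h2 rfl)

lemma sIn {S : Finset (Fin n × Fin n)} (hS : Good S) {a b c : Fin n}
    (h1 : sRel S b a) (h2 : sRel S c a) : b = c :=
  congrArg Prod.fst (inUnique hS h1 h2 rfl)

lemma transGen_sRel_lt {S : Finset (Fin n × Fin n)} (hS : Good S) {a b : Fin n}
    (h : Relation.TransGen (sRel S) a b) : a < b := by
  induction h with
  | single h => exact hS.1 _ h
  | tail _ h ih => exact ih.trans (hS.1 _ h)

/-- comparability of two forward paths from the same source, for a functional relation -/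
lemma fromSame {R : Fin n → Fin n → Prop} (hfun : ∀ a b c, R a b → R a c → b = c)
    {i j k : Fin n} (h1 : Relation.TransGen R i j) (h2 : Relation.TransGen R i k) :
    j = k ∨ Relation.TransGen R j k ∨ Relation.TransGen R k j := by
  induction h1 with
  | single h =>
    rcases casesHead h2 with h' | ⟨c, hc, hck⟩
    · exact Or.inl (hfun _ _ _ h h')
    · obtain rfl := hfun _ _ _ h hc
      exact Or.inr (Or.inl hck)
  | tail hib hbj ih =>
    rename_i b j'
    rcases ih with rfl | hbk | hkb
    · exact Or.inr (Or.inr (Relation.TransGen.single hbj))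
    · rcases casesHead hbk with h' | ⟨c, hc, hck⟩
      · exact Or.inl (hfun _ _ _ hbj h')
      · obtain rfl := hfun _ _ _ hbj hc
        exact Or.inr (Or.inl hck)
    · exact Or.inr (Or.inr (hkb.tail hbj))

lemma toSame {S : Finset (Fin n × Fin n)} (hS : Good S) {i j k : Fin n}
    (h1 : Relation.TransGen (sRel S) j i) (h2 : Relation.TransGen (sRel S) k i) :
    j = k ∨ Relation.TransGen (sRel S) j k ∨ Relation.TransGen (sRel S) k j := by
  have h1' : Relation.TransGen (Function.swap (sRel S)) i j := Relation.transGen_swap.2 h1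
  have h2' : Relation.TransGen (Function.swap (sRel S)) i k := Relation.transGen_swap.2 h2
  have hfun : ∀ a b c, Function.swap (sRel S) a b → Function.swap (sRel S) a c → b = c :=
    fun a b c hb hc => sIn hS hb hc
  rcases fromSame hfun h1' h2' with h | h | h
  · exact Or.inl h
  · exact Or.inr (Or.inr (Relation.transGen_swap.1 h))
  · exact Or.inr (Or.inl (Relation.transGen_swap.1 h))

/-- the connectivity relation of an arc set -/
def goodRel (S : Finset (Fin n × Fin n)) : Fin n → Fin n → Prop := fun a b =>
  a = b ∨ Relation.TransGen (sRel S) a b ∨ Relation.TransGen (sRel S) b a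

lemma goodRel_equiv {S : Finset (Fin n × Fin n)} (hS : Good S) :
    Equivalence (goodRel S) := by
  constructor
  · exact fun a => Or.inl rfl
  · rintro a b (rfl | h | h)
    · exact Or.inl rfl
    · exact Or.inr (Or.inr h)
    · exact Or.inr (Or.inl h)
  · rintro a b c (rfl | hab | hba) hbc
    · exact hbc
    · rcases hbc with rfl | hbc | hcb
      · exact Or.inr (Or.inl hab)
      · exact Or.inr (Or.inl (hab.trans hbc))
      · exact toSame hS hab hcb
    · rcases hbc with rfl | hbc | hcb
      · exact Or.inr (Or.inr hba)
      · exact fromSame (R := sRel S) (fun _ _ _ hb hc => sOut hS hb hc) hba hbc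
      · exact Or.inr (Or.inr (hcb.trans hba))

/-- the finpartition associated to a good arc set -/
noncomputable def sPart {S : Finset (Fin n × Fin n)} (hS : Good S) :
    Finpartition (Finset.univ : Finset (Fin n)) :=
  letI : DecidableRel (goodRel S) := fun _ _ => Classical.dec _
  Finpartition.ofSetoid ⟨goodRel S, goodRel_equiv hS⟩

lemma mem_part_sPart {S : Finset (Fin n × Fin n)} (hS : Good S) {a b : Fin n} :
    b ∈ (sPart hS).part a ↔ goodRel S a b := by
  letI : DecidableRel (goodRel S) := fun _ _ => Classical.dec _
  exact Finpartition.mem_part_ofSetoid_iff_rel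

lemma first_step {S : Finset (Fin n × Fin n)} (hS : Good S) {i j k : Fin n}
    (hij : (i, j) ∈ S) (h : Relation.TransGen (sRel S) i k) : j ≤ k := by
  rcases casesHead h with h' | ⟨c, hc, hck⟩
  · exact le_of_eq (sOut hS hij h')
  · obtain rfl := sOut hS hij hc
    exact (transGen_sRel_lt hS hck).le

lemma arc_sPart {S : Finset (Fin n × Fin n)} (hS : Good S) {i j : Fin n} :
    IsArc (sPart hS) i j ↔ (i, j) ∈ S := by
  constructor
  · rintro ⟨hij, B, hB, hiB, hjB, hmin⟩
    have hBpart : B = (sPart hS).part i := ((sPart hS).part_eq_of_mem hB hiB).symm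
    have hrel : goodRel S i j := (mem_part_sPart hS).1 (hBpart ▸ hjB)
    rcases hrel with rfl | hijT | hjiT
    · exact absurd hij (lt_irrefl _)
    · rcases casesHead hijT with h' | ⟨c, hc, hcj⟩
      · exact h'
      · -- c is the successor of i ; show c = j
        have hcB : c ∈ B := by
          rw [hBpart]
          exact (mem_part_sPart hS).2 (Or.inr (Or.inl (Relation.TransGen.single hc)))
        have hjc : j ≤ c := hmin c hcB (hS.1 _ hc)
        have hcj' : c < j := transGen_sRel_lt hS hcj
        exact absurd hjc (not_le.2 hcj')
    · exact absurd (transGen_sRel_lt hS hjiT) (not_lt.2 hij.le)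
  · intro hij
    refine ⟨hS.1 _ hij, (sPart hS).part i, (sPart hS).part_mem.2 (mem_univ i),
      (sPart hS).mem_part (mem_univ i),
      (mem_part_sPart hS).2 (Or.inr (Or.inl (Relation.TransGen.single hij))), ?_⟩
    intro k hk hik
    have hrel : goodRel S i k := (mem_part_sPart hS).1 hk
    rcases hrel with rfl | h | h
    · exact absurd hik (lt_irrefl _)
    · exact first_step hS hij h
    · exact absurd (transGen_sRel_lt hS h) (not_lt.2 hik.le)

lemma arcFinset_sPart {S : Finset (Fin n × Fin n)} (hS : Good S) :
    arcFinset (sPart hS) = S := by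
  ext p
  rw [mem_arcFinset]
  exact (arc_sPart hS (i := p.1) (j := p.2)).trans (by rfl)

end NCNaux

namespace NCNaux

variable {n : ℕ}

lemma parts_subset_of_part_iff {P Q : Finpartition (Finset.univ : Finset (Fin n))}
    (h : ∀ a b : Fin n, P.part a = P.part b ↔ Q.part a = Q.part b) : P.parts ⊆ Q.parts := by
  intro B hB
  obtain ⟨a, ha⟩ := P.nonempty_of_mem_parts hB
  have hBa : B = P.part a := (P.part_eq_of_mem hB ha).symm
  have hpq : P.part a = Q.part a := by
    ext k
    rw [P.mem_part_iff_part_eq_part (mem_univ k) (mem_univ a),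
      Q.mem_part_iff_part_eq_part (mem_univ k) (mem_univ a)]
    exact h k a
  rw [hBa, hpq]
  exact Q.part_mem.2 (mem_univ a)

lemma eq_of_arcFinset_eq {P Q : Finpartition (Finset.univ : Finset (Fin n))}
    (h : arcFinset P = arcFinset Q) : P = Q := by
  have harcR : arcR P = arcR Q := by
    funext a b
    apply propext
    have h1 : arcR P a b ↔ (a, b) ∈ arcFinset P :=
      ⟨fun h => mem_arcFinset.2 h, fun h => mem_arcFinset.1 h⟩
    have h2 : arcR Q a b ↔ (a, b) ∈ arcFinset Q :=
      ⟨fun h => mem_arcFinset.2 h, fun h => mem_arcFinset.1 h⟩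
    rw [h1, h2, h]
  have hpart : ∀ a b : Fin n, P.part a = P.part b ↔ Q.part a = Q.part b := by
    intro a b
    rw [part_eq_iff, part_eq_iff, harcR]
  apply Finpartition.ext
  exact Finset.Subset.antisymm (parts_subset_of_part_iff hpart)
    (parts_subset_of_part_iff fun a b => (hpart a b).symm)

lemma ncn_eq_A (n : ℕ) : ncn22 n = A n := by
  rw [ncn22]
  have hbij : Function.Bijective
      (fun P : {P : Finpartition (Finset.univ : Finset (Fin n)) //
          ¬HasCrossingP P 2 ∧ ¬HasNestingP P 2} =>
        (⟨arcFinset P.1, noCN_iff.1 P.2⟩ : {S : Finset (Fin n × Fin n) // Good S})) := by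
    constructor
    · rintro ⟨P, hP⟩ ⟨Q, hQ⟩ h
      exact Subtype.ext (eq_of_arcFinset_eq (congrArg Subtype.val h))
    · rintro ⟨S, hS⟩
      refine ⟨⟨sPart hS, ?_⟩, ?_⟩
      · rw [noCN_iff, arcFinset_sPart hS]
        exact hS
      · exact Subtype.ext (arcFinset_sPart hS)
  rw [Nat.card_eq_of_bijective _ hbij, Nat.card_eq_fintype_card, Fintype.card_subtype, A]

end NCNaux


/-- `NCN_{2,2}(n,1) = f_{2n−1}` and
`Σ NCN_{2,2}(n,1) xⁿ = (1 − 2x)/(1 − 3x + x²)`. -/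
theorem stmt11 :
    (∀ n : ℕ, 1 ≤ n → ncn22 n = Nat.fib (2 * n - 1)) ∧
    (PowerSeries.mk fun n => (ncn22 n : ℚ)) *
        (1 - 3 * PowerSeries.X + PowerSeries.X ^ 2) =
      1 - 2 * PowerSeries.X := by
  have hA : ∀ n, ncn22 n = NCNaux.A n := NCNaux.ncn_eq_A
  constructor
  · intro n hn
    obtain ⟨m, rfl⟩ : ∃ m, n = m + 1 := ⟨n - 1, by omega⟩
    have h21 : 2 * (m + 1) - 1 = 2 * m + 1 := by omega
    rw [hA, h21]
    exact (NCNaux.A_fib m).1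
  · have h0 : ncn22 0 = 1 := by rw [hA]; exact NCNaux.A_zero
    have h1 : ncn22 1 = 1 := by rw [hA]; exact NCNaux.A_one
    have hrec : ∀ m : ℕ, ncn22 (m + 2) + ncn22 m = 3 * ncn22 (m + 1) := by
      intro m
      rw [hA, hA, hA]
      exact NCNaux.A_rec m
    set a : ℕ → ℚ := fun n => (ncn22 n : ℚ) with ha
    have e3 : (3 : PowerSeries ℚ) = PowerSeries.C (R := ℚ) 3 := (map_ofNat (PowerSeries.C (R := ℚ)) 3).symm
    have e2 : (2 : PowerSeries ℚ) = PowerSeries.C (R := ℚ) 2 := (map_ofNat (PowerSeries.C (R := ℚ)) 2).symm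
    have expand : (PowerSeries.mk a) * (1 - 3 * PowerSeries.X + PowerSeries.X ^ 2) =
        PowerSeries.mk a - 3 * (PowerSeries.mk a * PowerSeries.X) +
          PowerSeries.mk a * PowerSeries.X ^ 2 := by ring
    rw [expand]
    apply PowerSeries.ext
    intro k
    have hc1 : ∀ j, (PowerSeries.coeff (R := ℚ) j) (3 * (PowerSeries.mk a * PowerSeries.X)) =
        3 * (PowerSeries.coeff (R := ℚ) j) (PowerSeries.mk a * PowerSeries.X) := by
      intro j; rw [e3, PowerSeries.coeff_C_mul]
    have hc2 : ∀ j, (PowerSeries.coeff (R := ℚ) j) (2 * PowerSeries.X : PowerSeries ℚ) =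
        2 * (PowerSeries.coeff (R := ℚ) j) (PowerSeries.X : PowerSeries ℚ) := by
      intro j; rw [e2, PowerSeries.coeff_C_mul]
    rw [map_add, map_sub, map_sub, hc1, hc2, PowerSeries.coeff_mul_X_pow',
      PowerSeries.coeff_one, PowerSeries.coeff_X, PowerSeries.coeff_mk]
    rcases k with _ | k
    · rw [PowerSeries.coeff_zero_mul_X]
      norm_num [ha, h0]
    · rw [PowerSeries.coeff_succ_mul_X, PowerSeries.coeff_mk]
      rcases k with _ | m
      · norm_num [ha, h0, h1]
      · have hcast : (ncn22 (m + 2) : ℚ) + ncn22 m = 3 * ncn22 (m + 1) := by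
          exact_mod_cast congrArg (fun x : ℕ => (x : ℚ)) (hrec m)
        rw [if_neg (show ¬(m + 1 + 1 = 0) from by omega),
          if_neg (show ¬(m + 1 + 1 = 1) from by omega),
          if_pos (show 2 ≤ m + 1 + 1 from by omega),
          show m + 1 + 1 - 2 = m from by omega, PowerSeries.coeff_mk]
        simp only [ha]
        push_cast
        linarith
end
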